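/- arXiv:2405.13248 — 5 statements merged into one kernel-verified Lean document; each statement's English description precedes it below -/
import Mathlib

section
/- Let R be a finite ring with |R| = q, let f : R^{d-1} → R be induced by a polynomial with integer coefficients and zero constant term, and suppose V_{f,1} = {(x_1,...,x_d) : x_d = f(x_1,...,x_{d-1}) + 1} is C-Salem in R^d. Then every proper left ideal (and every proper right ideal) I of R satisfies |I| ≤ C^{1/d} · q^{1/2 + 1/(2d)}. -/
open Finset

private lemma poly_mem' {R : Type} [Ring R] (J : AddSubgroup R)
    (hcl : (∀ a b : R, b ∈ J → a * b ∈ J) ∨ (∀ a b : R, b ∈ J → b * a ∈ J))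
    {ι : Type} (p : FreeAlgebra ℤ ι)
    (hp : FreeAlgebra.lift ℤ (fun _ : ι => (0 : ℤ)) p = 0)
    (x : ι → R) (hx : ∀ i, x i ∈ J) : FreeAlgebra.lift ℤ x p ∈ J := by
  set T : Subalgebra ℤ (R × R) :=
    { carrier := {z | (∃ n : ℤ, z.2 = n • (1 : R)) ∧ z.1 - z.2 ∈ J}
      add_mem' := by
        rintro ⟨a, b⟩ ⟨a', b'⟩ ⟨⟨n, rfl⟩, h⟩ ⟨⟨m, rfl⟩, h'⟩
        exact ⟨⟨n + m, by show n • (1:R) + m • (1:R) = _; rw [add_smul]⟩, by simpa [add_sub_add_comm] using J.add_mem h h'⟩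
      mul_mem' := by
        rintro ⟨a, b⟩ ⟨a', b'⟩ ⟨⟨n, rfl⟩, h⟩ ⟨⟨m, rfl⟩, h'⟩
        refine ⟨⟨n * m, by show (n • (1:R)) * (m • (1:R)) = _; rw [smul_mul_assoc, one_mul, smul_smul]⟩, ?_⟩
        show a * a' - n • (1:R) * (m • (1:R)) ∈ J
        rcases hcl with hL | hR
        · have key : a * a' - n • (1:R) * (m • (1:R))
              = a * (a' - m • (1:R)) + m • (a - n • (1:R)) := by
            simp only [mul_sub, smul_sub, mul_smul_comm, smul_mul_assoc, mul_one, one_mul,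
              smul_comm m n]
            abel
          rw [key]
          exact J.add_mem (hL _ _ h') (J.zsmul_mem h m)
        · have key : a * a' - n • (1:R) * (m • (1:R))
              = (a - n • (1:R)) * a' + n • (a' - m • (1:R)) := by
            simp only [sub_mul, smul_sub, mul_smul_comm, smul_mul_assoc, mul_one, one_mul, smul_comm n m (1:R)]
            abel
          rw [key]
          exact J.add_mem (hR _ _ h) (J.zsmul_mem h' n)
      algebraMap_mem' := by
        intro n
        refine ⟨⟨n, ?_⟩, ?_⟩
        · show ((n : ℤ) : R) = n • (1 : R); simp
        · show ((n : ℤ) : R) - ((n : ℤ) : R) ∈ J; simpa using J.zero_mem }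
  -- lift into T
  have hgen : ∀ i, ((x i, 0) : R × R) ∈ T := fun i =>
    ⟨⟨0, by simp⟩, by simpa using hx i⟩
  let Φ' : FreeAlgebra ℤ ι →ₐ[ℤ] T := FreeAlgebra.lift ℤ (fun i => (⟨(x i, 0), hgen i⟩ : T))
  have hΦ : (T.val.comp Φ') = FreeAlgebra.lift ℤ (fun i => ((x i, 0) : R × R)) := by
    apply FreeAlgebra.hom_ext
    funext i
    simp [Φ']
  have hmem : (FreeAlgebra.lift ℤ (fun i => ((x i, 0) : R × R)) p) ∈ T := by
    rw [← hΦ]; exact (Φ' p).2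
  have hfst : ((AlgHom.fst ℤ R R).comp (FreeAlgebra.lift ℤ (fun i => ((x i, 0) : R × R))))
      = FreeAlgebra.lift ℤ x := by
    apply FreeAlgebra.hom_ext; funext i
    simp only [AlgHom.coe_comp, Function.comp_apply, FreeAlgebra.lift_ι_apply]; rfl
  have hsnd : ((AlgHom.snd ℤ R R).comp (FreeAlgebra.lift ℤ (fun i => ((x i, 0) : R × R))))
      = (Algebra.ofId ℤ R).comp (FreeAlgebra.lift ℤ (fun _ : ι => (0 : ℤ))) := by
    apply FreeAlgebra.hom_ext; funext i
    simp only [AlgHom.coe_comp, Function.comp_apply, FreeAlgebra.lift_ι_apply]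
    rw [map_zero]; rfl
  have h1 : (FreeAlgebra.lift ℤ (fun i => ((x i, 0) : R × R)) p).1 = FreeAlgebra.lift ℤ x p :=
    congrArg (fun f => f p) hfst
  have h2 : (FreeAlgebra.lift ℤ (fun i => ((x i, 0) : R × R)) p).2 = 0 := by
    have h := congrArg (fun f => f p) hsnd
    simpa [hp, Algebra.ofId] using h
  have := hmem.2
  rw [h1, h2, sub_zero] at this
  exact this

private lemma salem_bound' {R : Type} [Ring R] [Fintype R] [DecidableEq R] (d : ℕ)
    (p : FreeAlgebra ℤ (Fin (d - 1))) (C : ℝ)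
    (hSalem : ∀ ψ : AddChar ((Fin (d - 1) → R) × R) ℂ, ψ ≠ 1 →
      ‖∑ x ∈ Finset.univ.filter
          (fun x : (Fin (d - 1) → R) × R => x.2 = FreeAlgebra.lift ℤ x.1 p + 1), ψ x‖
        ≤ C * ((Finset.univ.filter
          (fun x : (Fin (d - 1) → R) × R => x.2 = FreeAlgebra.lift ℤ x.1 p + 1)).card : ℝ)
            ^ ((1 : ℝ) / 2))
    (H : AddSubgroup ((Fin (d - 1) → R) × R))
    (hH : ∀ x : (Fin (d - 1) → R) × R, x.2 = FreeAlgebra.lift ℤ x.1 p + 1 → x ∉ H) :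
    (Nat.card H : ℝ) * ((Finset.univ.filter
          (fun x : (Fin (d - 1) → R) × R => x.2 = FreeAlgebra.lift ℤ x.1 p + 1)).card : ℝ)
            ^ ((1 : ℝ) / 2)
      ≤ C * (Fintype.card ((Fin (d - 1) → R) × R) : ℝ) := by
  classical
  set G := (Fin (d - 1) → R) × R with hG
  set S : Finset G := Finset.univ.filter (fun x : G => x.2 = FreeAlgebra.lift ℤ x.1 p + 1)
    with hS
  set n : ℕ := S.card with hn
  -- S is nonempty
  have hSne : ((fun _ => 0 : Fin (d-1) → R), FreeAlgebra.lift ℤ (fun _ => (0:R)) p + 1) ∈ S := by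
    simp [hS]
  have hnpos : 0 < (n : ℝ) := by
    have : 0 < n := Finset.card_pos.2 ⟨_, hSne⟩
    exact_mod_cast this
  set Q := G ⧸ H with hQ
  letI : Fintype Q := Fintype.ofFinite Q
  letI : DecidableEq Q := Classical.decEq Q
  set π : G →+ Q := QuotientAddGroup.mk' H with hπ
  have hπs : Function.Surjective π := QuotientAddGroup.mk'_surjective H
  set F : AddChar Q ℂ → ℂ := fun χ => ∑ s ∈ S, χ (π s) with hF
  have h0 : ∑ χ : AddChar Q ℂ, F χ = 0 := by
    rw [hF, Finset.sum_comm]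
    refine Finset.sum_eq_zero fun s hs => ?_
    refine AddChar.sum_apply_eq_zero_iff_ne_zero.2 fun h => ?_
    have : s ∈ H := (QuotientAddGroup.eq_zero_iff s).1 h
    exact hH s (by simpa [hS] using hs) this
  have hF1 : F 1 = (n : ℂ) := by
    simp [hF, hn]
  have hkey : (n : ℂ) = -∑ χ ∈ Finset.univ.erase (1 : AddChar Q ℂ), F χ := by
    have := Finset.add_sum_erase Finset.univ F (Finset.mem_univ (1 : AddChar Q ℂ))
    rw [h0, hF1] at this
    exact eq_neg_of_add_eq_zero_left this
  -- each nontrivial character bound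
  have hbound : ∀ χ : AddChar Q ℂ, χ ≠ 1 → ‖F χ‖ ≤ C * (n : ℝ) ^ ((1:ℝ)/2) := by
    intro χ hχ
    have hψ : (χ.compAddMonoidHom π) ≠ 1 := by
      intro h
      apply hχ
      ext q
      obtain ⟨g, rfl⟩ := hπs q
      have := DFunLike.congr_fun h g
      simpa using this
    have := hSalem (χ.compAddMonoidHom π) hψ
    simpa [hF, hS] using this
  -- existence of a nontrivial character (else contradiction)
  have hCn : 0 ≤ C * (n : ℝ) ^ ((1:ℝ)/2) := by
    by_cases hQ1 : ∃ χ : AddChar Q ℂ, χ ≠ 1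
    · obtain ⟨χ, hχ⟩ := hQ1
      exact (norm_nonneg (F χ)).trans (hbound χ hχ)
    · push_neg at hQ1
      exfalso
      have : Finset.univ.erase (1 : AddChar Q ℂ) = ∅ := by
        apply Finset.eq_empty_of_forall_notMem
        intro χ hχ
        exact (Finset.mem_erase.1 hχ).1 (hQ1 χ)
      rw [this, Finset.sum_empty, neg_zero] at hkey
      exact hnpos.ne' (by exact_mod_cast hkey)
  have hineq : (n : ℝ) ≤ (Nat.card Q : ℝ) * (C * (n : ℝ) ^ ((1:ℝ)/2)) := by
    have h1 : (n : ℝ) = ‖((n:ℕ) : ℂ)‖ := by simp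
    rw [show ((n:ℕ):ℂ) = -∑ χ ∈ Finset.univ.erase (1 : AddChar Q ℂ), F χ from hkey, norm_neg] at h1
    calc (n : ℝ) = ‖∑ χ ∈ Finset.univ.erase (1 : AddChar Q ℂ), F χ‖ := h1
      _ ≤ ∑ χ ∈ Finset.univ.erase (1 : AddChar Q ℂ), ‖F χ‖ := norm_sum_le _ _
      _ ≤ ∑ χ ∈ Finset.univ.erase (1 : AddChar Q ℂ), C * (n : ℝ) ^ ((1:ℝ)/2) := by
          refine Finset.sum_le_sum fun χ hχ => hbound χ (Finset.mem_erase.1 hχ).1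
      _ = (Finset.univ.erase (1 : AddChar Q ℂ)).card * (C * (n : ℝ) ^ ((1:ℝ)/2)) := by
          rw [Finset.sum_const, nsmul_eq_mul]
      _ ≤ (Nat.card Q : ℝ) * (C * (n : ℝ) ^ ((1:ℝ)/2)) := by
          refine mul_le_mul_of_nonneg_right ?_ hCn
          have h2 : (Finset.univ.erase (1 : AddChar Q ℂ)).card ≤ Fintype.card (AddChar Q ℂ) :=
            le_trans (Finset.card_erase_le) (le_of_eq (Finset.card_univ))
          have h3 : Fintype.card (AddChar Q ℂ) = Fintype.card Q := AddChar.card_eq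
          have h4 : Fintype.card Q = Nat.card Q := (Nat.card_eq_fintype_card).symm
          exact_mod_cast h2.trans_eq (h3.trans h4)
  -- multiply by |H| and use |Q| * |H| = |G|
  have hcard : (Nat.card Q : ℝ) * (Nat.card H : ℝ) = (Fintype.card G : ℝ) := by
    have := AddSubgroup.card_eq_card_quotient_mul_card_addSubgroup H
    rw [Nat.card_eq_fintype_card] at this
    exact_mod_cast this.symm
  have hsplit : (n : ℝ) = (n : ℝ) ^ ((1:ℝ)/2) * (n : ℝ) ^ ((1:ℝ)/2) := by
    rw [← Real.rpow_add hnpos]; norm_num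
  have hfinal := mul_le_mul_of_nonneg_left hineq (by positivity : (0:ℝ) ≤ (Nat.card H : ℝ))
  have hrpos : 0 < (n : ℝ) ^ ((1:ℝ)/2) := Real.rpow_pos_of_pos hnpos _
  refine le_of_mul_le_mul_right ?_ hrpos
  calc (Nat.card H : ℝ) * (n:ℝ)^((1:ℝ)/2) * (n:ℝ)^((1:ℝ)/2)
      = (Nat.card H : ℝ) * ((n:ℝ)^((1:ℝ)/2) * (n:ℝ)^((1:ℝ)/2)) := by ring
    _ = (Nat.card H : ℝ) * (n:ℝ) := by rw [← hsplit]
    _ ≤ (Nat.card H:ℝ) * ((Nat.card Q : ℝ) * (C * (n:ℝ)^((1:ℝ)/2))) := hfinal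
    _ = ((Nat.card Q:ℝ) * (Nat.card H:ℝ)) * C * (n:ℝ)^((1:ℝ)/2) := by ring
    _ = C * (Fintype.card G : ℝ) * (n:ℝ)^((1:ℝ)/2) := by rw [hcard]; ring

private lemma card_prod_pi' {R : Type} [Ring R] (d : ℕ) (J : AddSubgroup R) :
    Nat.card ((AddSubgroup.pi Set.univ fun _ : Fin (d-1) => J).prod J) =
      Nat.card J ^ (d - 1) * Nat.card J := by
  set H := (AddSubgroup.pi Set.univ fun _ : Fin (d-1) => J).prod J with hH
  have e : H ≃ (Fin (d-1) → J) × J :=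
    { toFun := fun z => (fun i => ⟨z.1.1 i, by
        have : (z : (Fin (d-1) → R) × R) ∈
            (AddSubgroup.pi Set.univ fun _ : Fin (d-1) => J).prod J := z.2
        rw [AddSubgroup.mem_prod] at this
        exact this.1 i (Set.mem_univ i)⟩, ⟨z.1.2, by
        have : (z : (Fin (d-1) → R) × R) ∈
            (AddSubgroup.pi Set.univ fun _ : Fin (d-1) => J).prod J := z.2
        rw [AddSubgroup.mem_prod] at this
        exact this.2⟩)
      invFun := fun w => ⟨((fun i => (w.1 i : R)), (w.2 : R)), by
        rw [hH, AddSubgroup.mem_prod]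
        exact ⟨fun i _ => (w.1 i).2, w.2.2⟩⟩
      left_inv := fun z => rfl
      right_inv := fun w => rfl }
  rw [Nat.card_congr e, Nat.card_prod, Nat.card_fun]
  simp



private lemma card_S' {R : Type} [Ring R] [Fintype R] [DecidableEq R] (d : ℕ)
    (p : FreeAlgebra ℤ (Fin (d - 1))) :
    (Finset.univ.filter
        (fun x : (Fin (d - 1) → R) × R => x.2 = FreeAlgebra.lift ℤ x.1 p + 1)).card
      = Fintype.card R ^ (d - 1) := by
  have h : Finset.univ.filter
        (fun x : (Fin (d - 1) → R) × R => x.2 = FreeAlgebra.lift ℤ x.1 p + 1)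
      = Finset.univ.image
        (fun a : Fin (d - 1) → R => ((a, FreeAlgebra.lift ℤ a p + 1) : (Fin (d-1) → R) × R)) := by
    ext ⟨a, b⟩
    simp only [Finset.mem_filter, Finset.mem_univ, true_and, Finset.mem_image]
    constructor
    · rintro rfl; exact ⟨a, rfl⟩
    · rintro ⟨a', h⟩
      rw [Prod.mk.injEq] at h
      obtain ⟨rfl, rfl⟩ := h
      rfl
  have hinj : Function.Injective
      (fun a : Fin (d - 1) → R => ((a, FreeAlgebra.lift ℤ a p + 1) : (Fin (d-1) → R) × R)) := by
    intro a a' haa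
    exact congrArg Prod.fst haa
  rw [h, Finset.card_image_of_injective _ hinj, Finset.card_univ, Fintype.card_fun]
  simp

private lemma ideal_bound' {R : Type} [Ring R] [Fintype R] [DecidableEq R] (d : ℕ) (hd : 2 ≤ d)
    (p : FreeAlgebra ℤ (Fin (d - 1)))
    (hp : FreeAlgebra.lift ℤ (fun _ : Fin (d - 1) => (0 : ℤ)) p = 0)
    (C : ℝ)
    (hSalem : ∀ ψ : AddChar ((Fin (d - 1) → R) × R) ℂ, ψ ≠ 1 →
      ‖∑ x ∈ Finset.univ.filter
          (fun x : (Fin (d - 1) → R) × R => x.2 = FreeAlgebra.lift ℤ x.1 p + 1), ψ x‖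
        ≤ C * ((Finset.univ.filter
          (fun x : (Fin (d - 1) → R) × R => x.2 = FreeAlgebra.lift ℤ x.1 p + 1)).card : ℝ)
            ^ ((1 : ℝ) / 2))
    (J : AddSubgroup R) (h1 : (1 : R) ∉ J)
    (hcl : (∀ a b : R, b ∈ J → a * b ∈ J) ∨ (∀ a b : R, b ∈ J → b * a ∈ J)) :
    (Nat.card J : ℝ) ≤ C ^ ((1 : ℝ) / d) *
      (Fintype.card R : ℝ) ^ ((1 : ℝ) / 2 + 1 / (2 * d)) := by
  classical
  have h10 : (1 : R) ≠ 0 := fun h => h1 (h ▸ J.zero_mem)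
  haveI : Nontrivial R := ⟨⟨1, 0, h10⟩⟩
  set H := (AddSubgroup.pi Set.univ fun _ : Fin (d-1) => J).prod J with hHdef
  have hH : ∀ x : (Fin (d - 1) → R) × R, x.2 = FreeAlgebra.lift ℤ x.1 p + 1 → x ∉ H := by
    intro x hx hmem
    rw [hHdef, AddSubgroup.mem_prod] at hmem
    have hfx : FreeAlgebra.lift ℤ x.1 p ∈ J :=
      poly_mem' J hcl p hp x.1 (fun i => hmem.1 i (Set.mem_univ i))
    have hsub : x.2 - FreeAlgebra.lift ℤ x.1 p ∈ J := J.sub_mem hmem.2 hfx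
    rw [hx, add_sub_cancel_left] at hsub
    exact h1 hsub
  have A1 := salem_bound' d p C hSalem H hH
  set q : ℝ := (Fintype.card R : ℝ) with hqdef
  have hqpos : (0 : ℝ) < q := by
    have h := Fintype.card_pos (α := R)
    rw [hqdef]
    exact_mod_cast h
  have hd1 : (1 : ℕ) ≤ d := le_trans (by norm_num) hd
  have hdcast : ((d - 1 : ℕ) : ℝ) = (d : ℝ) - 1 := by
    push_cast [Nat.cast_sub hd1]; ring
  have hdpos : (0 : ℝ) < (d : ℝ) := by
    have h : 0 < d := hd1
    exact_mod_cast h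
  set a : ℝ := (Nat.card J : ℝ) with hadef
  have ha : (0 : ℝ) ≤ a := Nat.cast_nonneg _
  -- rewrite cardinalities in A1
  have hcardH : (Nat.card H : ℝ) = a ^ d := by
    rw [hHdef, card_prod_pi']
    push_cast
    rw [← pow_succ]
    congr 1
    omega
  have hcardG : (Fintype.card ((Fin (d - 1) → R) × R) : ℝ) = q ^ ((d : ℝ)) := by
    rw [Fintype.card_prod, Fintype.card_fun, Fintype.card_fin]
    push_cast
    rw [← pow_succ, ← Real.rpow_natCast q (d - 1 + 1)]
    congr 1
    push_cast [Nat.cast_sub hd1]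
    ring
  have hcardS : ((Finset.univ.filter
          (fun x : (Fin (d - 1) → R) × R => x.2 = FreeAlgebra.lift ℤ x.1 p + 1)).card : ℝ)
            ^ ((1 : ℝ) / 2) = q ^ (((d : ℝ) - 1) / 2) := by
    rw [card_S']
    push_cast
    rw [← Real.rpow_natCast q (d - 1), ← Real.rpow_mul hqpos.le]
    congr 1
    rw [hdcast]
    ring
  rw [hcardH, hcardG, hcardS] at A1
  -- divide to get a ^ d ≤ C * q ^ ((d+1)/2)
  have hrpos2 : (0:ℝ) < q ^ (((d : ℝ) - 1) / 2) := Real.rpow_pos_of_pos hqpos _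
  have A2 : a ^ d ≤ C * q ^ (((d : ℝ) + 1) / 2) := by
    have h := (le_div_iff₀ hrpos2).2 A1
    rwa [mul_div_assoc, ← Real.rpow_sub hqpos,
      show (d : ℝ) - ((d : ℝ) - 1) / 2 = ((d : ℝ) + 1) / 2 by ring] at h
  -- C ≥ 0
  have hS0 : (0:ℝ) < ((Finset.univ.filter
      (fun x : (Fin (d - 1) → R) × R => x.2 = FreeAlgebra.lift ℤ x.1 p + 1)).card : ℝ) := by
    rw [card_S']
    have h : 0 < Fintype.card R ^ (d - 1) := pow_pos Fintype.card_pos _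
    exact_mod_cast h
  have hGne : (((fun _ => (0:R)) : Fin (d-1) → R), (1:R)) ≠ (0 : (Fin (d-1) → R) × R) := by
    intro h
    exact h10 (congrArg Prod.snd h)
  obtain ⟨ψ, hψa⟩ := AddChar.exists_apply_ne_zero.mpr hGne
  have hψ1 : ψ ≠ 1 := by
    rintro rfl
    exact hψa rfl
  have h0 := (norm_nonneg _).trans (hSalem ψ hψ1)
  have ht : (0:ℝ) < ((Finset.univ.filter
      (fun x : (Fin (d - 1) → R) × R => x.2 = FreeAlgebra.lift ℤ x.1 p + 1)).card : ℝ)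
        ^ ((1:ℝ)/2) := Real.rpow_pos_of_pos hS0 _
  have hC : (0:ℝ) ≤ C := by
    have h2 := div_nonneg h0 ht.le
    rwa [mul_div_cancel_right₀ _ ht.ne'] at h2
  -- conclude
  calc a = (a ^ d) ^ ((1:ℝ)/d) := by
        rw [← Real.rpow_natCast a d, ← Real.rpow_mul ha, mul_one_div,
          div_self hdpos.ne', Real.rpow_one]
    _ ≤ (C * q ^ (((d : ℝ) + 1) / 2)) ^ ((1:ℝ)/d) :=
        Real.rpow_le_rpow (pow_nonneg ha d) A2 (by positivity)
    _ = C ^ ((1:ℝ)/d) * (q ^ (((d : ℝ) + 1) / 2)) ^ ((1:ℝ)/d) :=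
        Real.mul_rpow hC (Real.rpow_nonneg hqpos.le _)
    _ = C ^ ((1:ℝ)/d) * q ^ ((1 : ℝ) / 2 + 1 / (2 * d)) := by
        rw [← Real.rpow_mul hqpos.le]
        congr 1
        field_simp

/-- If `f` is induced by a (noncommutative) polynomial with integer coefficients and zero
constant term, and `V_{f,1} = {(x, y) : y = f(x) + 1} ⊆ R^d` is `C`-Salem, then every
proper left ideal and every proper right ideal `I` of `R` satisfies
`|I| ≤ C^{1/d} · q^{1/2 + 1/(2d)}` where `q = |R|`. -/
theorem stmt3 {R : Type} [Ring R] [Fintype R] [DecidableEq R] (d : ℕ) (hd : 2 ≤ d)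
    (p : FreeAlgebra ℤ (Fin (d - 1)))
    (hp : FreeAlgebra.lift ℤ (fun _ : Fin (d - 1) => (0 : ℤ)) p = 0)
    (C : ℝ)
    (hSalem : ∀ ψ : AddChar ((Fin (d - 1) → R) × R) ℂ, ψ ≠ 1 →
      ‖∑ x ∈ Finset.univ.filter
          (fun x : (Fin (d - 1) → R) × R => x.2 = FreeAlgebra.lift ℤ x.1 p + 1), ψ x‖
        ≤ C * ((Finset.univ.filter
          (fun x : (Fin (d - 1) → R) × R => x.2 = FreeAlgebra.lift ℤ x.1 p + 1)).card : ℝ)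
            ^ ((1 : ℝ) / 2)) :
    (∀ I : Submodule R R, I ≠ ⊤ →
      (Nat.card I : ℝ) ≤ C ^ ((1 : ℝ) / d) *
        (Fintype.card R : ℝ) ^ ((1 : ℝ) / 2 + 1 / (2 * d)))
    ∧ (∀ I : Submodule Rᵐᵒᵖ R, I ≠ ⊤ →
      (Nat.card I : ℝ) ≤ C ^ ((1 : ℝ) / d) *
        (Fintype.card R : ℝ) ^ ((1 : ℝ) / 2 + 1 / (2 * d))) := by
  constructor
  · intro I hI
    have h1 : (1 : R) ∉ I := fun h => hI (Submodule.eq_top_iff'.2 fun x => by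
      simpa [smul_eq_mul] using I.smul_mem x h)
    have hcl : (∀ a b : R, b ∈ I.toAddSubgroup → a * b ∈ I.toAddSubgroup) ∨
        (∀ a b : R, b ∈ I.toAddSubgroup → b * a ∈ I.toAddSubgroup) :=
      Or.inl fun a b hb => by simpa [smul_eq_mul] using I.smul_mem a hb
    have h2 := ideal_bound' d hd p hp C hSalem I.toAddSubgroup h1 hcl
    have h3 : Nat.card I = Nat.card I.toAddSubgroup := rfl
    rw [h3]
    exact h2
  · intro I hI
    have h1 : (1 : R) ∉ I := fun h => hI (Submodule.eq_top_iff'.2 fun x => by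
      simpa [op_smul_eq_mul] using I.smul_mem (MulOpposite.op x) h)
    have hcl : (∀ a b : R, b ∈ I.toAddSubgroup → a * b ∈ I.toAddSubgroup) ∨
        (∀ a b : R, b ∈ I.toAddSubgroup → b * a ∈ I.toAddSubgroup) :=
      Or.inr fun a b hb => by simpa [op_smul_eq_mul] using I.smul_mem (MulOpposite.op a) hb
    have h2 := ideal_bound' d hd p hp C hSalem I.toAddSubgroup h1 hcl
    have h3 : Nat.card I = Nat.card I.toAddSubgroup := rfl
    rw [h3]
    exact h2
end

section
/- Let R be a finite ring with |R| = q and suppose H_1 = {x ∈ R^d : x_1 x_2 ⋯ x_d = 1} is C-Salem. Then every proper left ideal (and proper right ideal) I of R satisfies |I| ≤ C·q / |R^×|^{(d-1)/2}. -/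
open Finset Complex


lemma density_bound {G : Type} [AddCommGroup G] [Fintype G] [DecidableEq G]
    (H E : Finset G) (C : ℝ)
    (hne : ∃ ψ : AddChar G ℂ, ψ ≠ 1)
    (hC : ∀ ψ : AddChar G ℂ, ψ ≠ 1 → ‖∑ h ∈ H, ψ h‖ ≤ C * (H.card : ℝ) ^ ((1:ℝ)/2))
    (hdisj : ∀ x ∈ E, ∀ y ∈ E, x - y ∉ H) :
    (H.card : ℝ) * E.card * E.card
      ≤ C * (H.card : ℝ) ^ ((1:ℝ)/2) * (Fintype.card G * E.card) := by
  set A : AddChar G ℂ → ℂ := fun ψ => ∑ h ∈ H, ψ h with hA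
  set F : AddChar G ℂ → ℂ := fun ψ => ∑ x ∈ E, ψ x with hF
  have hconj : ∀ ψ : AddChar G ℂ, (starRingEnd ℂ) (F ψ) = ∑ x ∈ E, ψ (-x) := by
    intro ψ
    rw [hF, map_sum]
    exact Finset.sum_congr rfl fun x _ => by
      rw [AddChar.map_neg_eq_inv, AddChar.inv_apply_eq_conj]
  have hFc : ∀ ψ : AddChar G ℂ, F ψ * (starRingEnd ℂ) (F ψ)
      = ∑ y ∈ E, ∑ x ∈ E, ψ (y + -x) := by
    intro ψ
    rw [hconj, hF, Finset.sum_mul_sum]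
    exact Finset.sum_congr rfl fun y _ => Finset.sum_congr rfl fun x _ =>
      (AddChar.map_add_eq_mul ψ y (-x)).symm
  -- Parseval
  have parseval : ∑ ψ : AddChar G ℂ, F ψ * (starRingEnd ℂ) (F ψ)
      = ((Fintype.card G : ℂ)) * E.card := by
    simp_rw [hFc]
    rw [Finset.sum_comm]
    have : ∀ y ∈ E, ∑ ψ : AddChar G ℂ, ∑ x ∈ E, ψ (y + -x) = (Fintype.card G : ℂ) := by
      intro y hy
      rw [Finset.sum_comm]
      have h1 : ∀ x ∈ E, ∑ ψ : AddChar G ℂ, ψ (y + -x)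
          = if y = x then (Fintype.card G : ℂ) else 0 := by
        intro x _
        simp [AddChar.sum_apply_eq_ite, add_neg_eq_zero]
      rw [Finset.sum_congr rfl h1, Finset.sum_ite_eq E y (fun _ => (Fintype.card G : ℂ)),
        if_pos hy]
    rw [Finset.sum_congr rfl this, Finset.sum_const, nsmul_eq_mul, mul_comm]
  have parsevalR : ∑ ψ : AddChar G ℂ, Complex.normSq (F ψ)
      = (Fintype.card G : ℝ) * E.card := by
    have := parseval
    simp_rw [Complex.mul_conj] at this
    exact_mod_cast this
  -- main sum vanishes
  have hS : ∑ ψ : AddChar G ℂ, A ψ * (F ψ * (starRingEnd ℂ) (F ψ)) = 0 := by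
    have hterm : ∀ ψ : AddChar G ℂ, A ψ * (F ψ * (starRingEnd ℂ) (F ψ))
        = ∑ h ∈ H, ∑ y ∈ E, ∑ x ∈ E, ψ (h + (y + -x)) := by
      intro ψ
      rw [hFc, hA, Finset.sum_mul_sum]
      simp_rw [Finset.mul_sum]
      exact Finset.sum_congr rfl fun h _ => Finset.sum_congr rfl fun y _ =>
        Finset.sum_congr rfl fun x _ => (AddChar.map_add_eq_mul ψ h (y + -x)).symm
    simp_rw [hterm]
    rw [Finset.sum_comm]
    refine Finset.sum_eq_zero fun h hh => ?_
    rw [Finset.sum_comm]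
    refine Finset.sum_eq_zero fun y hy => ?_
    rw [Finset.sum_comm]
    refine Finset.sum_eq_zero fun x hx => ?_
    rw [AddChar.sum_apply_eq_ite, if_neg]
    intro hcontra
    have : h = x - y := by
      have := hcontra
      rw [add_eq_zero_iff_eq_neg] at this
      rw [this]; abel
    exact hdisj x hx y hy (this ▸ hh)
  -- split off trivial character
  have hsplit := (Finset.add_sum_erase Finset.univ
    (fun ψ : AddChar G ℂ => A ψ * (F ψ * (starRingEnd ℂ) (F ψ))) (Finset.mem_univ 1)).symm
  rw [hS] at hsplit
  have hf1 : A 1 * (F 1 * (starRingEnd ℂ) (F 1))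
      = (((H.card : ℝ) * E.card * E.card : ℝ) : ℂ) := by
    have hA1 : A 1 = (H.card : ℂ) := by simp [hA, AddChar.one_apply]
    have hF1 : F 1 = (E.card : ℂ) := by simp [hF, AddChar.one_apply]
    rw [hA1, hF1]
    push_cast
    simp [mul_assoc]
  have hCpos : 0 ≤ C * (H.card : ℝ) ^ ((1:ℝ)/2) := by
    obtain ⟨ψ0, hψ0⟩ := hne
    exact le_trans (norm_nonneg _) (hC ψ0 hψ0)
  have hnorm : (H.card : ℝ) * E.card * E.card
      = ‖∑ ψ ∈ Finset.univ.erase 1, A ψ * (F ψ * (starRingEnd ℂ) (F ψ))‖ := by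
    have h0 : A 1 * (F 1 * (starRingEnd ℂ) (F 1))
        = - ∑ ψ ∈ Finset.univ.erase 1, A ψ * (F ψ * (starRingEnd ℂ) (F ψ)) :=
      eq_neg_of_add_eq_zero_left hsplit.symm
    rw [← norm_neg, ← h0, hf1, Complex.norm_real, Real.norm_of_nonneg (by positivity)]
  rw [hnorm]
  calc ‖∑ ψ ∈ Finset.univ.erase 1, A ψ * (F ψ * (starRingEnd ℂ) (F ψ))‖
      ≤ ∑ ψ ∈ Finset.univ.erase 1, ‖A ψ * (F ψ * (starRingEnd ℂ) (F ψ))‖ :=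
        norm_sum_le _ _
    _ ≤ ∑ ψ ∈ Finset.univ.erase 1, (C * (H.card : ℝ) ^ ((1:ℝ)/2)) * Complex.normSq (F ψ) := by
        refine Finset.sum_le_sum fun ψ hψ => ?_
        have hψ1 : ψ ≠ 1 := Finset.ne_of_mem_erase hψ
        rw [norm_mul, Complex.mul_conj, Complex.norm_real,
          Real.norm_of_nonneg (Complex.normSq_nonneg _)]
        exact mul_le_mul_of_nonneg_right (hC ψ hψ1) (Complex.normSq_nonneg _)
    _ ≤ ∑ ψ : AddChar G ℂ, (C * (H.card : ℝ) ^ ((1:ℝ)/2)) * Complex.normSq (F ψ) := by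
        refine Finset.sum_le_sum_of_subset_of_nonneg (Finset.subset_univ _) fun ψ _ _ => ?_
        exact mul_nonneg hCpos (Complex.normSq_nonneg _)
    _ = C * (H.card : ℝ) ^ ((1:ℝ)/2) * ((Fintype.card G : ℝ) * E.card) := by
        rw [← Finset.mul_sum, parsevalR]


section RingSide
variable {R : Type} [Ring R] [Fintype R] [DecidableEq R]

omit [DecidableEq R] in
lemma my_mul_eq_one_symm {a b : R} (h : a * b = 1) : b * a = 1 := by
  have hsurj : Function.Surjective (fun x : R => a * x) := fun y =>
    ⟨b * y, by show a * (b * y) = y; rw [← mul_assoc, h, one_mul]⟩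
  have hinj : Function.Injective (fun x : R => a * x) :=
    Finite.injective_iff_surjective.mpr hsurj
  have : a * (b * a) = a * 1 := by rw [← mul_assoc, h, one_mul, mul_one]
  exact hinj this

omit [DecidableEq R] in
lemma my_isUnit_of_list_prod {l : List R} (h : l.prod = 1) : ∀ x ∈ l, IsUnit x := by
  intro x hx
  obtain ⟨s, t, rfl⟩ := List.append_of_mem hx
  rw [List.prod_append, List.prod_cons] at h
  have h1 : (x * t.prod) * s.prod = 1 := my_mul_eq_one_symm h
  rw [mul_assoc] at h1
  have h2 : (t.prod * s.prod) * x = 1 := my_mul_eq_one_symm h1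
  exact ⟨⟨x, t.prod * s.prod, h1, h2⟩, rfl⟩

lemma card_H (m : ℕ) :
    (Finset.univ.filter (fun x : Fin (m+1) → R => (List.ofFn x).prod = 1)).card
      = Fintype.card Rˣ ^ m := by
  have key : (Finset.univ : Finset (Fin m → Rˣ)).card
      = (Finset.univ.filter (fun x : Fin (m+1) → R => (List.ofFn x).prod = 1)).card := by
    refine Finset.card_bij
      (fun (u : Fin m → Rˣ) _ =>
        (Fin.snoc (fun i => ((u i : R))) (((((List.ofFn u).prod)⁻¹ : Rˣ) : R)) : Fin (m+1) → R))
      ?_ ?_ ?_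
    · intro u _
      rw [Finset.mem_filter]
      refine ⟨Finset.mem_univ _, ?_⟩
      rw [List.ofFn_succ']
      simp only [Fin.snoc_castSucc, Fin.snoc_last]
      rw [List.prod_concat]
      have : (List.ofFn fun i => ((u i : R))) = List.map (Units.coeHom R) (List.ofFn u) := by
        rw [List.map_ofFn]; rfl
      rw [this, List.prod_hom]
      exact Units.mul_inv _
    · intro u₁ _ u₂ _ hu
      funext i
      have := congrFun hu (Fin.castSucc i)
      simp only [Fin.snoc_castSucc] at this
      exact Units.ext this
    · intro x hx
      rw [Finset.mem_filter] at hx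
      have hx1 := hx.2
      have hunit : ∀ i : Fin m, IsUnit (x i.castSucc) := fun i =>
        my_isUnit_of_list_prod hx1 _ (List.mem_ofFn.mpr ⟨i.castSucc, rfl⟩)
      refine ⟨fun i => (hunit i).unit, Finset.mem_univ _, ?_⟩
      have hcoe : (List.ofFn fun i => (((hunit i).unit : Rˣ) : R))
          = List.ofFn fun i => x i.castSucc :=
        congrArg List.ofFn (funext fun i => (hunit i).unit_spec)
      rw [List.ofFn_succ', List.prod_concat] at hx1
      have hval : (((List.ofFn fun i => (hunit i).unit).prod : Rˣ) : R)
          = (List.ofFn fun i => x i.castSucc).prod := by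
        rw [← hcoe]
        have : (List.ofFn fun i => (((hunit i).unit : Rˣ) : R))
            = List.map (Units.coeHom R) (List.ofFn fun i => (hunit i).unit) := by
          rw [List.map_ofFn]; rfl
        rw [this, List.prod_hom]; rfl
      funext j
      refine Fin.lastCases ?_ ?_ j
      · show (Fin.snoc (fun i => (((hunit i).unit : Rˣ) : R))
            ((((List.ofFn fun i => (hunit i).unit).prod)⁻¹ : Rˣ) : R) : Fin (m+1) → R)
            (Fin.last m) = x (Fin.last m)
        rw [Fin.snoc_last]
        have h2 : (((List.ofFn fun i => (hunit i).unit).prod : Rˣ) : R) * x (Fin.last m) = 1 := by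
          rw [hval]; exact hx1
        calc ((((List.ofFn fun i => (hunit i).unit).prod)⁻¹ : Rˣ) : R)
            = ((((List.ofFn fun i => (hunit i).unit).prod)⁻¹ : Rˣ) : R)
              * ((((List.ofFn fun i => (hunit i).unit).prod : Rˣ) : R) * x (Fin.last m)) := by
              rw [h2, mul_one]
          _ = x (Fin.last m) := by
              rw [← mul_assoc, Units.inv_mul, one_mul]
      · intro i
        show (Fin.snoc (fun i => (((hunit i).unit : Rˣ) : R))
            ((((List.ofFn fun i => (hunit i).unit).prod)⁻¹ : Rˣ) : R) : Fin (m+1) → R)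
            i.castSucc = x i.castSucc
        rw [Fin.snoc_castSucc]
        exact (hunit i).unit_spec
  rw [← key, Finset.card_univ, Fintype.card_fun, Fintype.card_fin]

lemma card_E_last (m : ℕ) (I : Submodule R R)
    [DecidablePred fun x : Fin (m+1) → R => x (Fin.last m) ∈ I]
    [DecidablePred fun a : R => a ∈ I] :
    (Finset.univ.filter (fun x : Fin (m+1) → R => x (Fin.last m) ∈ I)).card
      = Nat.card I * Fintype.card R ^ m := by
  have h1 : Nat.card I = (Finset.univ.filter (fun a : R => a ∈ I)).card := by
    rw [Nat.card_eq_fintype_card]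
    exact Fintype.card_subtype _
  have key : (Finset.univ.filter (fun x : Fin (m+1) → R => x (Fin.last m) ∈ I)).card
      = ((Finset.univ.filter (fun a : R => a ∈ I)) ×ˢ (Finset.univ : Finset (Fin m → R))).card := by
    refine Finset.card_bij' (fun x _ => (x (Fin.last m), Fin.init x))
      (fun p _ => Fin.snoc p.2 p.1) ?_ ?_ ?_ ?_
    · intro x hx
      rw [Finset.mem_filter] at hx
      exact Finset.mk_mem_product (Finset.mem_filter.mpr ⟨Finset.mem_univ _, hx.2⟩)
        (Finset.mem_univ _)
    · intro p hp
      rw [Finset.mem_filter]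
      rw [Finset.mem_product, Finset.mem_filter] at hp
      refine ⟨Finset.mem_univ _, ?_⟩
      show (Fin.snoc p.2 p.1 : Fin (m+1) → R) (Fin.last m) ∈ I
      rw [Fin.snoc_last]
      exact hp.1.2
    · intro x _
      exact Fin.snoc_init_self x
    · intro p _
      simp [Fin.init_snoc, Fin.snoc_last]
  rw [key, Finset.card_product, Finset.card_univ, Fintype.card_fun, Fintype.card_fin, h1]

lemma card_E_first (m : ℕ) (I : Submodule Rᵐᵒᵖ R)
    [DecidablePred fun x : Fin (m+1) → R => x 0 ∈ I]
    [DecidablePred fun a : R => a ∈ I] :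
    (Finset.univ.filter (fun x : Fin (m+1) → R => x 0 ∈ I)).card
      = Nat.card I * Fintype.card R ^ m := by
  have h1 : Nat.card I = (Finset.univ.filter (fun a : R => a ∈ I)).card := by
    rw [Nat.card_eq_fintype_card]
    exact Fintype.card_subtype _
  have key : (Finset.univ.filter (fun x : Fin (m+1) → R => x 0 ∈ I)).card
      = ((Finset.univ.filter (fun a : R => a ∈ I)) ×ˢ (Finset.univ : Finset (Fin m → R))).card := by
    refine Finset.card_bij' (fun x _ => (x 0, Fin.tail x))
      (fun p _ => Fin.cons p.1 p.2) ?_ ?_ ?_ ?_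
    · intro x hx
      rw [Finset.mem_filter] at hx
      exact Finset.mk_mem_product (Finset.mem_filter.mpr ⟨Finset.mem_univ _, hx.2⟩)
        (Finset.mem_univ _)
    · intro p hp
      rw [Finset.mem_filter]
      rw [Finset.mem_product, Finset.mem_filter] at hp
      refine ⟨Finset.mem_univ _, ?_⟩
      show (Fin.cons p.1 p.2 : Fin (m+1) → R) 0 ∈ I
      rw [Fin.cons_zero]
      exact hp.1.2
    · intro x _
      exact Fin.cons_self_tail x
    · intro p _
      simp [Fin.tail_cons, Fin.cons_zero]
  rw [key, Finset.card_product, Finset.card_univ, Fintype.card_fun, Fintype.card_fin, h1]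

end RingSide


lemma core_bound {R : Type} [Ring R] [Fintype R] [DecidableEq R] [Nontrivial R] (m : ℕ) (C : ℝ)
    (hSalem : ∀ ψ : AddChar (Fin (m+1) → R) ℂ, ψ ≠ 1 →
      ‖∑ x ∈ Finset.univ.filter (fun x : Fin (m+1) → R => (List.ofFn x).prod = 1), ψ x‖
        ≤ C * ((Finset.univ.filter
            (fun x : Fin (m+1) → R => (List.ofFn x).prod = 1)).card : ℝ) ^ ((1 : ℝ) / 2))
    (E : Finset (Fin (m+1) → R)) (n : ℕ) (hn : 0 < n)
    (hEcard : E.card = n * Fintype.card R ^ m)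
    (hdisj : ∀ x ∈ E, ∀ y ∈ E, (List.ofFn (x - y)).prod ≠ 1) :
    (n : ℝ) ≤ C * (Fintype.card R : ℝ) / (Fintype.card Rˣ : ℝ) ^ ((m : ℝ) / 2) := by
  classical
  set H : Finset (Fin (m+1) → R) :=
    Finset.univ.filter (fun x : Fin (m+1) → R => (List.ofFn x).prod = 1) with hHdef
  have hne : ∃ ψ : AddChar (Fin (m+1) → R) ℂ, ψ ≠ 1 := by
    have hcard : 1 < Fintype.card (AddChar (Fin (m+1) → R) ℂ) := by
      rw [AddChar.card_eq, Fintype.card_fun, Fintype.card_fin]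
      exact Nat.one_lt_pow (Nat.succ_ne_zero m) Fintype.one_lt_card
    obtain ⟨ψ0, hψ0⟩ := Fintype.exists_ne_of_one_lt_card hcard 1
    exact ⟨ψ0, hψ0⟩
  have hdisj' : ∀ x ∈ E, ∀ y ∈ E, x - y ∉ H := by
    intro x hx y hy hmem
    exact hdisj x hx y hy (Finset.mem_filter.mp hmem).2
  have db := density_bound H E C hne hSalem hdisj'
  set a : ℝ := (Fintype.card Rˣ : ℝ) with hadef
  set qq : ℝ := (Fintype.card R : ℝ) with hqdef
  have ha : (0:ℝ) < a := by
    rw [hadef]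
    exact_mod_cast (Fintype.card_pos : 0 < Fintype.card Rˣ)
  have hq : (0:ℝ) < qq := by
    rw [hqdef]
    exact_mod_cast (Fintype.card_pos : 0 < Fintype.card R)
  have hnn : (0:ℝ) < (n : ℝ) := by exact_mod_cast hn
  set s : ℝ := a ^ ((m : ℝ) / 2) with hsdef
  have hs : (0:ℝ) < s := Real.rpow_pos_of_pos ha _
  have hHc : ((H.card : ℕ) : ℝ) = a ^ m := by
    rw [hHdef, card_H m]; push_cast; ring
  have hHalf : ((H.card : ℕ) : ℝ) ^ ((1:ℝ)/2) = s := by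
    rw [hHc, ← Real.rpow_natCast a m, ← Real.rpow_mul ha.le, hsdef, mul_one_div]
  have hEc : ((E.card : ℕ) : ℝ) = (n : ℝ) * qq ^ m := by
    rw [hEcard]; push_cast; ring
  have hGc : ((Fintype.card (Fin (m+1) → R) : ℕ) : ℝ) = qq ^ (m+1) := by
    rw [Fintype.card_fun, Fintype.card_fin]; push_cast; ring
  rw [hHalf, hHc, hEc, hGc] at db
  have hX : (0:ℝ) < (n : ℝ) * qq ^ m := by positivity
  have h3 : a ^ m * ((n : ℝ) * qq ^ m) ≤ C * s * qq ^ (m+1) := by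
    refine le_of_mul_le_mul_right ?_ hX
    calc a ^ m * ((n : ℝ) * qq ^ m) * ((n : ℝ) * qq ^ m)
        = a ^ m * ((n : ℝ) * qq ^ m) * ((n : ℝ) * qq ^ m) := rfl
      _ ≤ C * s * (qq ^ (m+1) * ((n : ℝ) * qq ^ m)) := db
      _ = C * s * qq ^ (m+1) * ((n : ℝ) * qq ^ m) := by ring
  have hss : s * s = a ^ m := by
    rw [hsdef, ← Real.rpow_add ha, add_halves, Real.rpow_natCast]
  have h5 : (s * (n : ℝ)) * (s * qq ^ m) ≤ (C * qq) * (s * qq ^ m) := by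
    calc (s * (n : ℝ)) * (s * qq ^ m) = (s * s) * ((n : ℝ) * qq ^ m) := by ring
      _ = a ^ m * ((n : ℝ) * qq ^ m) := by rw [hss]
      _ ≤ C * s * qq ^ (m+1) := h3
      _ = (C * qq) * (s * qq ^ m) := by ring
  have h6 : s * (n : ℝ) ≤ C * qq := le_of_mul_le_mul_right h5 (by positivity)
  rw [le_div_iff₀ hs]
  linarith [h6, mul_comm s (n : ℝ)]


/-- If the generalized hyperbola `H_1 = {x ∈ R^d : x_1 x_2 ⋯ x_d = 1}` is `C`-Salem, then
every proper left ideal and every proper right ideal `I` of `R` satisfies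
`|I| ≤ C·q / |R^×|^{(d-1)/2}` with `q = |R|`. -/
theorem stmt7 {R : Type} [Ring R] [Fintype R] [DecidableEq R] (d : ℕ) (hd : 1 ≤ d) (C : ℝ)
    (hSalem : ∀ ψ : AddChar (Fin d → R) ℂ, ψ ≠ 1 →
      ‖∑ x ∈ Finset.univ.filter (fun x : Fin d → R => (List.ofFn x).prod = 1), ψ x‖
        ≤ C * ((Finset.univ.filter
            (fun x : Fin d → R => (List.ofFn x).prod = 1)).card : ℝ) ^ ((1 : ℝ) / 2)) :
    (∀ I : Submodule R R, I ≠ ⊤ →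
      (Nat.card I : ℝ) ≤ C * (Fintype.card R : ℝ) /
        (Fintype.card Rˣ : ℝ) ^ (((d : ℝ) - 1) / 2))
    ∧ (∀ I : Submodule Rᵐᵒᵖ R, I ≠ ⊤ →
      (Nat.card I : ℝ) ≤ C * (Fintype.card R : ℝ) /
        (Fintype.card Rˣ : ℝ) ^ (((d : ℝ) - 1) / 2)) := by
  classical
  obtain ⟨m, rfl⟩ : ∃ m, d = m + 1 := ⟨d - 1, (Nat.succ_pred_eq_of_pos hd).symm⟩
  have hexp : (((m + 1 : ℕ) : ℝ) - 1) / 2 = (m : ℝ) / 2 := by push_cast; ring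
  rcases subsingleton_or_nontrivial R with hR | hR
  · constructor <;> intro I hI
    · exact absurd (Submodule.eq_top_iff'.mpr fun x => (Subsingleton.elim x 0) ▸ I.zero_mem) hI
    · exact absurd (Submodule.eq_top_iff'.mpr fun x => (Subsingleton.elim x 0) ▸ I.zero_mem) hI
  constructor
  · intro I hI
    set E : Finset (Fin (m+1) → R) :=
      Finset.univ.filter (fun x : Fin (m+1) → R => x (Fin.last m) ∈ I) with hEdef
    have hEcard : E.card = Nat.card I * Fintype.card R ^ m := card_E_last m I
    have hn : 0 < Nat.card I := Nat.card_pos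
    have hdisj : ∀ x ∈ E, ∀ y ∈ E, (List.ofFn (x - y)).prod ≠ 1 := by
      intro x hx y hy hprod
      have hxI : x (Fin.last m) ∈ I := (Finset.mem_filter.mp hx).2
      have hyI : y (Fin.last m) ∈ I := (Finset.mem_filter.mp hy).2
      have hzI : (x - y) (Fin.last m) ∈ I := by
        simpa [Pi.sub_apply] using I.sub_mem hxI hyI
      have hmem : (List.ofFn (x - y)).prod ∈ I := by
        rw [List.ofFn_succ', List.prod_concat]
        simpa [smul_eq_mul] using
          I.smul_mem ((List.ofFn fun i => (x - y) i.castSucc).prod) hzI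
      rw [hprod] at hmem
      exact hI ((Ideal.eq_top_iff_one I).mpr hmem)
    have := core_bound m C hSalem E (Nat.card I) hn hEcard hdisj
    rw [hexp]
    exact this
  · intro I hI
    set E : Finset (Fin (m+1) → R) :=
      Finset.univ.filter (fun x : Fin (m+1) → R => x 0 ∈ I) with hEdef
    have hEcard : E.card = Nat.card I * Fintype.card R ^ m := card_E_first m I
    have hn : 0 < Nat.card I := Nat.card_pos
    have hdisj : ∀ x ∈ E, ∀ y ∈ E, (List.ofFn (x - y)).prod ≠ 1 := by
      intro x hx y hy hprod
      have hxI : x 0 ∈ I := (Finset.mem_filter.mp hx).2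
      have hyI : y 0 ∈ I := (Finset.mem_filter.mp hy).2
      have hzI : (x - y) 0 ∈ I := by
        simpa [Pi.sub_apply] using I.sub_mem hxI hyI
      have hmem : (List.ofFn (x - y)).prod ∈ I := by
        rw [List.ofFn_succ, List.prod_cons]
        simpa [MulOpposite.smul_eq_mul_unop] using
          I.smul_mem (MulOpposite.op ((List.ofFn fun i => (x - y) i.succ).prod)) hzI
      rw [hprod] at hmem
      have : I = ⊤ := Submodule.eq_top_iff'.mpr fun r => by
        simpa [MulOpposite.smul_eq_mul_unop] using I.smul_mem (MulOpposite.op r) hmem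
      exact hI this
    have := core_bound m C hSalem E (Nat.card I) hn hEcard hdisj
    rw [hexp]
    exact this
end

section
/- Let R = R_1 × R_2 be a product of finite rings, let f be a polynomial with integer coefficients and zero constant term in d-1 variables, c an integer, and let C_R, C_{R_1}, C_{R_2} denote the smallest constants such that V_{f,c}(R), V_{f,c}(R_1), V_{f,c}(R_2) are respectively C-Salem. Then C_R = max(C_{R_1}·|V_{f,c}(R_2)|^{1/2}, C_{R_2}·|V_{f,c}(R_1)|^{1/2}). -/
open Finset

noncomputable def salemConst {G : Type} [AddCommGroup G] [Fintype G] (S : Finset G) : ℝ :=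
  sSup {r : ℝ | ∃ ψ : AddChar G ℂ, ψ ≠ 1 ∧
    r = ‖∑ x ∈ S, ψ x‖ / (S.card : ℝ) ^ ((1 : ℝ) / 2)}

namespace SalemAux

variable {A B : Type} [AddCommGroup A] [Fintype A] [AddCommGroup B] [Fintype B]

noncomputable def q (S : Finset A) (ψ : AddChar A ℂ) : ℝ :=
  ‖∑ x ∈ S, ψ x‖ / (S.card : ℝ) ^ ((1 : ℝ) / 2)

lemma salemConst_eq (S : Finset A) :
    salemConst S = sSup {r : ℝ | ∃ ψ : AddChar A ℂ, ψ ≠ 1 ∧ r = q S ψ} := rfl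

noncomputable def sq (S : Finset A) : ℝ := (S.card : ℝ) ^ ((1 : ℝ) / 2)

lemma sq_nonneg' (S : Finset A) : 0 ≤ sq S := Real.rpow_nonneg (by positivity) _

lemma sq_mul_sq (S : Finset A) (hS : S.Nonempty) : sq S * sq S = (S.card : ℝ) := by
  have h0 : (0 : ℝ) < (S.card : ℝ) := by
    have := hS.card_pos; positivity
  rw [sq, ← Real.rpow_add h0]
  norm_num

lemma sq_pos (S : Finset A) (hS : S.Nonempty) : 0 < sq S := by
  apply Real.rpow_pos_of_pos
  have := hS.card_pos; positivity

lemma q_nonneg (S : Finset A) (ψ : AddChar A ℂ) : 0 ≤ q S ψ :=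
  div_nonneg (norm_nonneg _) (sq_nonneg' S)

lemma norm_sum_le_card (S : Finset A) (ψ : AddChar A ℂ) :
    ‖∑ x ∈ S, ψ x‖ ≤ (S.card : ℝ) := by
  calc ‖∑ x ∈ S, ψ x‖ ≤ ∑ x ∈ S, ‖ψ x‖ := norm_sum_le _ _
  _ = (S.card : ℝ) := by simp

lemma q_le_sq (S : Finset A) (hS : S.Nonempty) (ψ : AddChar A ℂ) : q S ψ ≤ sq S := by
  show ‖∑ x ∈ S, ψ x‖ / sq S ≤ sq S
  rw [div_le_iff₀ (sq_pos S hS)]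
  calc ‖∑ x ∈ S, ψ x‖ ≤ (S.card : ℝ) := norm_sum_le_card S ψ
  _ = sq S * sq S := (sq_mul_sq S hS).symm

lemma bddAbove_salemSet (S : Finset A) (hS : S.Nonempty) :
    BddAbove {r : ℝ | ∃ ψ : AddChar A ℂ, ψ ≠ 1 ∧ r = q S ψ} := by
  refine ⟨sq S, ?_⟩
  rintro r ⟨ψ, -, rfl⟩
  exact q_le_sq S hS ψ

lemma salemConst_nonneg (S : Finset A) : 0 ≤ salemConst S :=
  Real.sSup_nonneg (by rintro r ⟨ψ, -, rfl⟩; exact q_nonneg S ψ)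

lemma q_le_salemConst (S : Finset A) (hS : S.Nonempty) {ψ : AddChar A ℂ} (hψ : ψ ≠ 1) :
    q S ψ ≤ salemConst S :=
  le_csSup (bddAbove_salemSet S hS) ⟨ψ, hψ, rfl⟩

/-- Product of additive characters. -/
def prodChar (ψ₁ : AddChar A ℂ) (ψ₂ : AddChar B ℂ) : AddChar (A × B) ℂ where
  toFun x := ψ₁ x.1 * ψ₂ x.2
  map_zero_eq_one' := by simp
  map_add_eq_mul' a b := by
    show ψ₁ (a.1 + b.1) * ψ₂ (a.2 + b.2) = _
    rw [AddChar.map_add_eq_mul, AddChar.map_add_eq_mul]; ring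

@[simp] lemma prodChar_apply (ψ₁ : AddChar A ℂ) (ψ₂ : AddChar B ℂ) (x : A × B) :
    prodChar ψ₁ ψ₂ x = ψ₁ x.1 * ψ₂ x.2 := rfl

lemma prodChar_eq_one_iff (ψ₁ : AddChar A ℂ) (ψ₂ : AddChar B ℂ) :
    prodChar ψ₁ ψ₂ = 1 ↔ ψ₁ = 1 ∧ ψ₂ = 1 := by
  constructor
  · intro h
    constructor
    · ext a
      have := DFunLike.congr_fun h (a, 0)
      simpa using this
    · ext b
      have := DFunLike.congr_fun h (0, b)
      simpa using this
  · rintro ⟨rfl, rfl⟩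
    ext x; simp

lemma char_decomp (ψ : AddChar (A × B) ℂ) :
    ψ = prodChar (ψ.compAddMonoidHom (AddMonoidHom.inl A B))
        (ψ.compAddMonoidHom (AddMonoidHom.inr A B)) := by
  ext x
  simp only [prodChar_apply, AddChar.compAddMonoidHom_apply, AddMonoidHom.inl_apply,
    AddMonoidHom.inr_apply]
  rw [← AddChar.map_add_eq_mul]
  congr 1
  simp

lemma sum_prod (S : Finset A) (T : Finset B) (ψ₁ : AddChar A ℂ) (ψ₂ : AddChar B ℂ) :
    ∑ x ∈ S ×ˢ T, prodChar ψ₁ ψ₂ x = (∑ a ∈ S, ψ₁ a) * (∑ b ∈ T, ψ₂ b) := by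
  rw [Finset.sum_product, Finset.sum_mul_sum]
  simp

lemma sq_prod (S : Finset A) (T : Finset B) : sq (S ×ˢ T) = sq S * sq T := by
  rw [sq, sq, sq, Finset.card_product, Nat.cast_mul, Real.mul_rpow] <;> positivity

lemma q_prod (S : Finset A) (T : Finset B) (ψ₁ : AddChar A ℂ) (ψ₂ : AddChar B ℂ) :
    q (S ×ˢ T) (prodChar ψ₁ ψ₂) = q S ψ₁ * q T ψ₂ := by
  show ‖∑ x ∈ S ×ˢ T, prodChar ψ₁ ψ₂ x‖ / sq (S ×ˢ T) = _
  rw [sum_prod, sq_prod, norm_mul, q, q, div_mul_div_comm]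
  rfl

lemma q_one (T : Finset B) (hT : T.Nonempty) : q T (1 : AddChar B ℂ) = sq T := by
  have h : q T (1 : AddChar B ℂ) = (T.card : ℝ) / sq T := by
    show ‖∑ b ∈ T, (1 : AddChar B ℂ) b‖ / sq T = _
    congr 1
    rw [show ∑ b ∈ T, (1 : AddChar B ℂ) b = (T.card : ℂ) by simp]
    simp
  rw [h, eq_comm, eq_div_iff (ne_of_gt (sq_pos T hT)), sq_mul_sq T hT]

lemma salemConst_prod (S : Finset A) (T : Finset B) (hS : S.Nonempty) (hT : T.Nonempty) :
    salemConst (S ×ˢ T) = max (salemConst S * sq T) (salemConst T * sq S) := by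
  have hST : (S ×ˢ T).Nonempty := hS.product hT
  apply le_antisymm
  · rw [salemConst_eq]
    apply Real.sSup_le
    · rintro r ⟨ψ, hψ, rfl⟩
      obtain hdec := char_decomp ψ
      set ψ₁ := ψ.compAddMonoidHom (AddMonoidHom.inl A B)
      set ψ₂ := ψ.compAddMonoidHom (AddMonoidHom.inr A B)
      rw [hdec, q_prod]
      have h12 : ψ₁ ≠ 1 ∨ ψ₂ ≠ 1 := by
        by_contra h
        push_neg at h
        rw [hdec, (prodChar_eq_one_iff ψ₁ ψ₂).mpr ⟨h.1, h.2⟩] at hψ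
        exact hψ rfl
      rcases h12 with h1 | h2
      · refine le_trans ?_ (le_max_left _ _)
        exact mul_le_mul (q_le_salemConst S hS h1) (q_le_sq T hT ψ₂) (q_nonneg T ψ₂)
          (salemConst_nonneg S)
      · refine le_trans ?_ (le_max_right _ _)
        rw [mul_comm]
        exact mul_le_mul (q_le_salemConst T hT h2) (q_le_sq S hS ψ₁) (q_nonneg S ψ₁)
          (salemConst_nonneg T)
    · exact le_max_of_le_left (mul_nonneg (salemConst_nonneg S) (sq_nonneg' T))
  · have hBig0 : 0 ≤ salemConst (S ×ˢ T) := salemConst_nonneg _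
    apply max_le
    · rw [← le_div_iff₀ (sq_pos T hT)]
      rw [salemConst_eq S]
      apply Real.sSup_le
      · rintro r ⟨ψ₁, h1, rfl⟩
        rw [le_div_iff₀ (sq_pos T hT)]
        have hmem : q S ψ₁ * sq T = q (S ×ˢ T) (prodChar ψ₁ 1) := by
          rw [q_prod, q_one T hT]
        rw [hmem]
        have hne : prodChar ψ₁ (1 : AddChar B ℂ) ≠ 1 := by
          intro h
          exact h1 ((prodChar_eq_one_iff _ _).mp h).1
        exact q_le_salemConst _ hST hne
      · exact div_nonneg hBig0 (sq_nonneg' T)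
    · rw [← le_div_iff₀ (sq_pos S hS)]
      rw [salemConst_eq T]
      apply Real.sSup_le
      · rintro r ⟨ψ₂, h2, rfl⟩
        rw [le_div_iff₀ (sq_pos S hS)]
        have hmem : q T ψ₂ * sq S = q (S ×ˢ T) (prodChar 1 ψ₂) := by
          rw [q_prod, q_one S hS, mul_comm]
        rw [hmem]
        have hne : prodChar (1 : AddChar A ℂ) ψ₂ ≠ 1 := by
          intro h
          exact h2 ((prodChar_eq_one_iff _ _).mp h).2
        exact q_le_salemConst _ hST hne
      · exact div_nonneg hBig0 (sq_nonneg' S)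

lemma salemConst_map (e : A ≃+ B) (S : Finset A) :
    salemConst (S.map e.toEquiv.toEmbedding) = salemConst S := by
  rw [salemConst, salemConst]
  congr 1
  ext r
  simp only [Set.mem_setOf_eq, Finset.card_map]
  constructor
  · rintro ⟨ψ, hψ, rfl⟩
    refine ⟨ψ.compAddMonoidHom e.toAddMonoidHom, ?_, ?_⟩
    · intro h
      apply hψ
      ext b
      have := DFunLike.congr_fun h (e.symm b)
      simpa using this
    · rw [Finset.sum_map]
      rfl
  · rintro ⟨ψ, hψ, rfl⟩
    refine ⟨ψ.compAddMonoidHom e.symm.toAddMonoidHom, ?_, ?_⟩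
    · intro h
      apply hψ
      ext a
      have := DFunLike.congr_fun h (e a)
      simpa using this
    · rw [Finset.sum_map]
      congr 2
      exact Finset.sum_congr rfl fun x _ => by simp

end SalemAux

lemma lift_comp {ι S T : Type*} [Ring S] [Ring T] (g : S →ₐ[ℤ] T) (v : ι → S)
    (p : FreeAlgebra ℤ ι) :
    g (FreeAlgebra.lift ℤ v p) = FreeAlgebra.lift ℤ (fun i => g (v i)) p := by
  have h : g.comp (FreeAlgebra.lift ℤ v) = FreeAlgebra.lift ℤ (fun i => g (v i)) := by
    apply FreeAlgebra.hom_ext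
    funext i
    simp [FreeAlgebra.lift_ι_apply]
  exact DFunLike.congr_fun h p

lemma lift_pair {ι R₁ R₂ : Type*} [Ring R₁] [Ring R₂] (f : ι → R₁) (g : ι → R₂)
    (p : FreeAlgebra ℤ ι) :
    FreeAlgebra.lift ℤ (fun i => (f i, g i)) p
      = (FreeAlgebra.lift ℤ f p, FreeAlgebra.lift ℤ g p) := by
  refine Prod.ext ?_ ?_
  · exact lift_comp (AlgHom.fst ℤ R₁ R₂) (fun i => (f i, g i)) p
  · exact lift_comp (AlgHom.snd ℤ R₁ R₂) (fun i => (f i, g i)) p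

lemma lift_zero {ι R : Type*} [Ring R] (p : FreeAlgebra ℤ ι)
    (hp : FreeAlgebra.lift ℤ (fun _ : ι => (0 : ℤ)) p = 0) :
    FreeAlgebra.lift ℤ (fun _ : ι => (0 : R)) p = 0 := by
  have h := lift_comp (Algebra.ofId ℤ R) (fun _ : ι => (0 : ℤ)) p
  rw [hp, map_zero] at h
  exact h.symm

def prodArrowEquiv (n : ℕ) (R₁ R₂ : Type) [Ring R₁] [Ring R₂] :
    ((Fin n → R₁ × R₂) × (R₁ × R₂)) ≃+ (((Fin n → R₁) × R₁) × ((Fin n → R₂) × R₂)) where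
  toFun x := ((fun i => (x.1 i).1, x.2.1), (fun i => (x.1 i).2, x.2.2))
  invFun y := (fun i => (y.1.1 i, y.2.1 i), (y.1.2, y.2.2))
  left_inv x := rfl
  right_inv y := rfl
  map_add' x y := rfl

open SalemAux in
/-- For a product `R = R₁ × R₂` of finite rings and `V_{f,c}` the graph of an integer
polynomial `f` (zero constant term) shifted by an integer `c`, the Salem constants satisfy
`C_R = max(C_{R₁}·|V_{f,c}(R₂)|^{1/2}, C_{R₂}·|V_{f,c}(R₁)|^{1/2})`. -/
theorem stmt9 {R₁ R₂ : Type} [Ring R₁] [Fintype R₁] [DecidableEq R₁]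
    [Ring R₂] [Fintype R₂] [DecidableEq R₂] (d : ℕ) (hd : 2 ≤ d)
    (p : FreeAlgebra ℤ (Fin (d - 1)))
    (hp : FreeAlgebra.lift ℤ (fun _ : Fin (d - 1) => (0 : ℤ)) p = 0) (c : ℤ) :
    salemConst (Finset.univ.filter (fun x : (Fin (d - 1) → R₁ × R₂) × (R₁ × R₂) =>
        x.2 = FreeAlgebra.lift ℤ x.1 p + (c : R₁ × R₂)))
      = max
        (salemConst (Finset.univ.filter (fun x : (Fin (d - 1) → R₁) × R₁ =>
            x.2 = FreeAlgebra.lift ℤ x.1 p + (c : R₁))) *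
          ((Finset.univ.filter (fun x : (Fin (d - 1) → R₂) × R₂ =>
            x.2 = FreeAlgebra.lift ℤ x.1 p + (c : R₂))).card : ℝ) ^ ((1 : ℝ) / 2))
        (salemConst (Finset.univ.filter (fun x : (Fin (d - 1) → R₂) × R₂ =>
            x.2 = FreeAlgebra.lift ℤ x.1 p + (c : R₂))) *
          ((Finset.univ.filter (fun x : (Fin (d - 1) → R₁) × R₁ =>
            x.2 = FreeAlgebra.lift ℤ x.1 p + (c : R₁))).card : ℝ) ^ ((1 : ℝ) / 2)) := by
  classical
  set SR := Finset.univ.filter (fun x : (Fin (d - 1) → R₁ × R₂) × (R₁ × R₂) =>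
      x.2 = FreeAlgebra.lift ℤ x.1 p + (c : R₁ × R₂)) with hSR
  set S1 := Finset.univ.filter (fun x : (Fin (d - 1) → R₁) × R₁ =>
      x.2 = FreeAlgebra.lift ℤ x.1 p + (c : R₁)) with hS1
  set S2 := Finset.univ.filter (fun x : (Fin (d - 1) → R₂) × R₂ =>
      x.2 = FreeAlgebra.lift ℤ x.1 p + (c : R₂)) with hS2
  have h1ne : S1.Nonempty := by
    refine ⟨⟨fun _ => 0, (c : R₁)⟩, ?_⟩
    rw [hS1, Finset.mem_filter]
    exact ⟨Finset.mem_univ _, by rw [lift_zero p hp, zero_add]⟩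
  have h2ne : S2.Nonempty := by
    refine ⟨⟨fun _ => 0, (c : R₂)⟩, ?_⟩
    rw [hS2, Finset.mem_filter]
    exact ⟨Finset.mem_univ _, by rw [lift_zero p hp, zero_add]⟩
  set e := prodArrowEquiv (d - 1) R₁ R₂ with he
  have hmap : S1 ×ˢ S2 = SR.map e.toEquiv.toEmbedding := by
    ext y
    simp only [Finset.mem_map, Finset.mem_product, hSR, hS1, hS2, Finset.mem_filter,
      Finset.mem_univ, true_and, Equiv.coe_toEmbedding, AddEquiv.coe_toEquiv]
    constructor
    · rintro ⟨h1, h2⟩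
      refine ⟨e.symm y, ?_, e.apply_symm_apply y⟩
      show ((y.1.2, y.2.2) : R₁ × R₂)
          = FreeAlgebra.lift ℤ (fun i => ((y.1.1 i, y.2.1 i) : R₁ × R₂)) p + (c : R₁ × R₂)
      rw [lift_pair]
      exact Prod.ext h1 h2
    · rintro ⟨x, hx, rfl⟩
      have hsplit : FreeAlgebra.lift ℤ x.1 p
          = (FreeAlgebra.lift ℤ (fun i => (x.1 i).1) p,
             FreeAlgebra.lift ℤ (fun i => (x.1 i).2) p) := by
        exact lift_pair (fun i => (x.1 i).1) (fun i => (x.1 i).2) p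
      rw [hsplit] at hx
      have h1 := congrArg Prod.fst hx
      have h2 := congrArg Prod.snd hx
      exact ⟨h1, h2⟩
  calc salemConst SR = salemConst (SR.map e.toEquiv.toEmbedding) :=
        (salemConst_map e SR).symm
  _ = salemConst (S1 ×ˢ S2) := by rw [hmap]
  _ = max (salemConst S1 * sq S2) (salemConst S2 * sq S1) :=
        salemConst_prod S1 S2 h1ne h2ne
  _ = _ := rfl
end

section
/- Let R be a finite ring with two-sided ideal J, let S = R/J, let f be a polynomial with integer coefficients (zero constant term) in d-1 variables, c an integer. If C_R and C_S denote the smallest Salem constants of V_{f,c}(R) ⊆ R^d and V_{f,c}(S) ⊆ S^d respectively, then C_R ≥ C_S · |J|^{(d-1)/2}. -/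
open Finset

section Aux

variable {R S : Type} [Ring R] [Fintype R] [DecidableEq R]
    [Ring S] [Fintype S] [DecidableEq S]

/-- Each fiber of a surjective ring hom has the cardinality of the kernel. -/
lemma aux_fiber_card (π : R →+* S) (hπ : Function.Surjective π) (s : S) :
    Fintype.card {r : R // π r = s} = Nat.card (RingHom.ker π) := by
  obtain ⟨r0, hr0⟩ := hπ s
  have e : {r : R // π r = s} ≃ RingHom.ker π :=
    Equiv.subtypeEquiv (Equiv.subRight r0) fun x => by
      simp [RingHom.mem_ker, map_sub, hr0, sub_eq_zero]
  rw [← Nat.card_congr e]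
  exact (Nat.card_eq_fintype_card).symm

lemma aux_pi_fiber_card (π : R →+* S) (hπ : Function.Surjective π) {n : ℕ}
    (t : Fin n → S) :
    Fintype.card {a : Fin n → R // ∀ i, π (a i) = t i}
      = Nat.card (RingHom.ker π) ^ n := by
  rw [← Nat.card_eq_fintype_card,
    Nat.card_congr (Equiv.subtypePiEquivPi (p := fun i (b : R) => π b = t i)),
    Nat.card_pi]
  have h : ∀ i : Fin n, Nat.card {b : R // π b = t i} = Nat.card (RingHom.ker π) :=
    fun i => by rw [Nat.card_eq_fintype_card, aux_fiber_card π hπ]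
  rw [Finset.prod_congr rfl (fun i _ => h i), Finset.prod_const, Finset.card_univ,
    Fintype.card_fin]

lemma aux_map_lift (π : R →+* S) {n : ℕ} (a : Fin n → R) (p : FreeAlgebra ℤ (Fin n)) :
    π (FreeAlgebra.lift ℤ a p) = FreeAlgebra.lift ℤ (π ∘ a) p := by
  have h : (π.toIntAlgHom.comp (FreeAlgebra.lift ℤ a))
      = FreeAlgebra.lift ℤ (π ∘ a) := by
    apply FreeAlgebra.hom_ext
    funext i
    simp [RingHom.toIntAlgHom]
  exact DFunLike.congr_fun h p

variable (π : R →+* S) {n : ℕ}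
  (p : FreeAlgebra ℤ (Fin n)) (c : ℤ)

/-- The fiber of the projection over a point of `V_{f,c}(S)` inside `V_{f,c}(R)` has
cardinality `|J|^n`. -/
lemma aux_V_fiber_card (hπ : Function.Surjective π) (y : (Fin n → S) × S)
    (hy : y.2 = FreeAlgebra.lift ℤ y.1 p + (c : S)) :
    ((Finset.univ.filter (fun x : (Fin n → R) × R =>
        x.2 = FreeAlgebra.lift ℤ x.1 p + (c : R))).filter
      (fun x => ((π ∘ x.1, π x.2) : (Fin n → S) × S) = y)).card
      = Nat.card (RingHom.ker π) ^ n := by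
  rw [← aux_pi_fiber_card π hπ y.1, Fintype.card_subtype]
  refine Finset.card_bij' (fun x _ => x.1)
    (fun a _ => (a, FreeAlgebra.lift ℤ a p + (c : R))) ?_ ?_ ?_ ?_
  · intro x hx
    simp only [Finset.mem_filter, Finset.mem_univ, true_and] at hx ⊢
    intro i
    have := congrArg Prod.fst hx.2
    exact congrFun this i
  · intro a ha
    simp only [Finset.mem_filter, Finset.mem_univ, true_and] at ha
    rw [Finset.mem_filter, Finset.mem_filter]
    refine ⟨⟨Finset.mem_univ _, rfl⟩, ?_⟩
    have h1 : π ∘ a = y.1 := funext ha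
    have h2 : π (FreeAlgebra.lift ℤ a p + (c : R))
        = FreeAlgebra.lift ℤ (π ∘ a) p + (c : S) := by
      rw [map_add, aux_map_lift, map_intCast]
    refine Prod.ext h1 ?_
    simp only [h2, h1, hy]
  · intro x hx
    rw [Finset.mem_filter, Finset.mem_filter] at hx
    exact (Prod.ext rfl hx.1.2.symm)
  · intro a _
    rfl

lemma aux_sum_pullback (hπ : Function.Surjective π) (g : (Fin n → S) × S → ℂ) :
    ∑ x ∈ Finset.univ.filter (fun x : (Fin n → R) × R =>
        x.2 = FreeAlgebra.lift ℤ x.1 p + (c : R)), g ((π ∘ x.1, π x.2))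
      = (Nat.card (RingHom.ker π) ^ n : ℕ) •
        ∑ y ∈ Finset.univ.filter (fun y : (Fin n → S) × S =>
          y.2 = FreeAlgebra.lift ℤ y.1 p + (c : S)), g y := by
  rw [Finset.smul_sum,
    ← Finset.sum_fiberwise_of_maps_to (g := fun x : (Fin n → R) × R =>
        ((π ∘ x.1, π x.2) : (Fin n → S) × S))
      (t := Finset.univ.filter (fun y : (Fin n → S) × S =>
        y.2 = FreeAlgebra.lift ℤ y.1 p + (c : S)))
      (fun x hx => by
        simp only [Finset.mem_filter, Finset.mem_univ, true_and] at hx ⊢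
        rw [hx, map_add, aux_map_lift, map_intCast])]
  refine Finset.sum_congr rfl fun y hy => ?_
  simp only [Finset.mem_filter, Finset.mem_univ, true_and] at hy
  calc ∑ x ∈ (Finset.univ.filter (fun x : (Fin n → R) × R =>
        x.2 = FreeAlgebra.lift ℤ x.1 p + (c : R))).filter
        (fun x => ((π ∘ x.1, π x.2) : (Fin n → S) × S) = y), g ((π ∘ x.1, π x.2))
      = ∑ _x ∈ (Finset.univ.filter (fun x : (Fin n → R) × R =>
        x.2 = FreeAlgebra.lift ℤ x.1 p + (c : R))).filter
        (fun x => ((π ∘ x.1, π x.2) : (Fin n → S) × S) = y), g y := by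
        refine Finset.sum_congr rfl fun x hx => ?_
        simp only [Finset.mem_filter] at hx
        rw [hx.2]
    _ = _ := by rw [Finset.sum_const, aux_V_fiber_card π p c hπ y hy]

lemma aux_card_V (hπ : Function.Surjective π) :
    (Finset.univ.filter (fun x : (Fin n → R) × R =>
        x.2 = FreeAlgebra.lift ℤ x.1 p + (c : R))).card
      = Nat.card (RingHom.ker π) ^ n *
        (Finset.univ.filter (fun y : (Fin n → S) × S =>
          y.2 = FreeAlgebra.lift ℤ y.1 p + (c : S))).card := by
  rw [Finset.card_eq_sum_card_fiberwise (f := fun x : (Fin n → R) × R =>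
        ((π ∘ x.1, π x.2) : (Fin n → S) × S))
      (t := Finset.univ.filter (fun y : (Fin n → S) × S =>
        y.2 = FreeAlgebra.lift ℤ y.1 p + (c : S)))
      (fun x hx => by
        simp only [Finset.mem_coe, Finset.mem_filter, Finset.mem_univ, true_and] at hx ⊢
        rw [hx, map_add, aux_map_lift, map_intCast])]
  rw [Finset.sum_congr rfl (fun y hy => aux_V_fiber_card π p c hπ y
    (by simpa using (Finset.mem_filter.mp hy).2)), Finset.sum_const, smul_eq_mul,
    mul_comm]

end Aux

/-- Let `S = R/J` be the quotient of a finite ring `R` by a two-sided ideal `J`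
(presented via a surjective ring homomorphism `π : R → S` with kernel `J`), and let
`V_{f,c}` be the graph of an integer polynomial `f` with zero constant term, shifted by
an integer `c`. Then the Salem constants satisfy `C_R ≥ C_S · |J|^{(d-1)/2}`. -/
theorem stmt12 {R S : Type} [Ring R] [Fintype R] [DecidableEq R]
    [Ring S] [Fintype S] [DecidableEq S]
    (π : R →+* S) (hπ : Function.Surjective π) (d : ℕ) (hd : 2 ≤ d)
    (p : FreeAlgebra ℤ (Fin (d - 1)))
    (hp : FreeAlgebra.lift ℤ (fun _ : Fin (d - 1) => (0 : ℤ)) p = 0) (c : ℤ) :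
    salemConst (Finset.univ.filter (fun x : (Fin (d - 1) → S) × S =>
        x.2 = FreeAlgebra.lift ℤ x.1 p + (c : S))) *
      (Nat.card (RingHom.ker π) : ℝ) ^ (((d : ℝ) - 1) / 2)
    ≤ salemConst (Finset.univ.filter (fun x : (Fin (d - 1) → R) × R =>
        x.2 = FreeAlgebra.lift ℤ x.1 p + (c : R))) := by
  classical
  set k := Nat.card (RingHom.ker π) with hk
  set VR := Finset.univ.filter (fun x : (Fin (d - 1) → R) × R =>
      x.2 = FreeAlgebra.lift ℤ x.1 p + (c : R)) with hVR
  set VS := Finset.univ.filter (fun y : (Fin (d - 1) → S) × S =>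
      y.2 = FreeAlgebra.lift ℤ y.1 p + (c : S)) with hVS
  have hdn : (d : ℝ) - 1 = ((d - 1 : ℕ) : ℝ) := by
    have : (1 : ℕ) ≤ d := le_trans (by norm_num) hd
    push_cast [Nat.cast_sub this]
    ring
  have hk1 : 1 ≤ k := Nat.one_le_iff_ne_zero.mpr (Nat.card_ne_zero.mpr
    ⟨⟨⟨0, by simp⟩⟩, inferInstance⟩)
  have hkpos : (0 : ℝ) < (k : ℝ) := by exact_mod_cast hk1
  have hVSne : VS.Nonempty :=
    ⟨((fun _ => 0), FreeAlgebra.lift ℤ (fun _ => (0 : S)) p + (c : S)), by simp [hVS]⟩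
  have hmSpos : (0 : ℝ) < (VS.card : ℝ) := by exact_mod_cast Finset.card_pos.mpr hVSne
  have hcardVR : VR.card = k ^ (d - 1) * VS.card := aux_card_V π p c hπ
  have hmRpos : (0 : ℝ) < (VR.card : ℝ) := by
    have : 0 < VR.card := by
      rw [hcardVR]
      exact Nat.mul_pos (Nat.pow_pos hk1) (Finset.card_pos.mpr hVSne)
    exact_mod_cast this
  set K := (k : ℝ) ^ (((d : ℝ) - 1) / 2) with hK
  have hKpos : 0 < K := Real.rpow_pos_of_pos hkpos _
  -- the set defining the Salem constant on the R side
  set AR := {r : ℝ | ∃ ψ : AddChar ((Fin (d - 1) → R) × R) ℂ, ψ ≠ 1 ∧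
    r = ‖∑ x ∈ VR, ψ x‖ / (VR.card : ℝ) ^ ((1 : ℝ) / 2)} with hAR
  set AS := {r : ℝ | ∃ ψ : AddChar ((Fin (d - 1) → S) × S) ℂ, ψ ≠ 1 ∧
    r = ‖∑ x ∈ VS, ψ x‖ / (VS.card : ℝ) ^ ((1 : ℝ) / 2)} with hAS
  have hARnonneg : ∀ r ∈ AR, 0 ≤ r := by
    rintro r ⟨ψ, -, rfl⟩
    exact div_nonneg (norm_nonneg _) (Real.rpow_nonneg (Nat.cast_nonneg _) _)
  have hARbdd : BddAbove AR := by
    refine ⟨(VR.card : ℝ), ?_⟩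
    rintro r ⟨ψ, -, rfl⟩
    have h1 : ‖∑ x ∈ VR, ψ x‖ ≤ (VR.card : ℝ) := by
      refine le_trans (norm_sum_le _ _) ?_
      calc ∑ i ∈ VR, ‖ψ i‖ ≤ ∑ _i ∈ VR, (1 : ℝ) :=
            Finset.sum_le_sum (fun i _ => le_of_eq (ψ.toMonoidHom.isOfFinOrder <| isOfFinOrder_of_finite _).norm_eq_one)
        _ = (VR.card : ℝ) := by simp
    have h2 : (1 : ℝ) ≤ (VR.card : ℝ) ^ ((1 : ℝ) / 2) :=
      Real.one_le_rpow (by exact_mod_cast hmRpos) (by norm_num)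
    calc ‖∑ x ∈ VR, ψ x‖ / (VR.card : ℝ) ^ ((1 : ℝ) / 2)
        ≤ ‖∑ x ∈ VR, ψ x‖ := div_le_self (norm_nonneg _) h2
      _ ≤ (VR.card : ℝ) := h1
  -- the projection as an AddMonoidHom
  let Φ : ((Fin (d - 1) → R) × R) →+ ((Fin (d - 1) → S) × S) :=
    { toFun := fun x => (π ∘ x.1, π x.2)
      map_zero' := by
        refine Prod.ext ?_ ?_ <;> simp [funext_iff]
      map_add' := fun a b => by
        refine Prod.ext ?_ ?_ <;> simp [funext_iff] }
  have hΦsurj : Function.Surjective Φ := by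
    rintro ⟨t, s⟩
    obtain ⟨b, hb⟩ := hπ s
    choose a ha using fun i => hπ (t i)
    exact ⟨(a, b), Prod.ext (funext ha) hb⟩
  have hmap : ∀ r ∈ AS, r * K ∈ AR := by
    rintro r ⟨ψ, hψ, rfl⟩
    refine ⟨ψ.compAddMonoidHom Φ, ?_, ?_⟩
    · rw [AddChar.ne_one_iff] at hψ ⊢
      obtain ⟨y, hy⟩ := hψ
      obtain ⟨x, rfl⟩ := hΦsurj y
      exact ⟨x, hy⟩
    · have hsum : ∑ x ∈ VR, (ψ.compAddMonoidHom Φ) x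
          = (k ^ (d - 1) : ℕ) • ∑ y ∈ VS, ψ y := by
        exact aux_sum_pullback π p c hπ (fun y => ψ y)
      have hnorm : ‖∑ x ∈ VR, (ψ.compAddMonoidHom Φ) x‖
          = ((k : ℝ)) ^ (d - 1) * ‖∑ y ∈ VS, ψ y‖ := by
        rw [hsum, nsmul_eq_mul, norm_mul]
        push_cast
        simp
      rw [hnorm, hcardVR]
      -- pure real computation
      have hhalf : ((k : ℝ)) ^ (d - 1) = (k : ℝ) ^ (((d - 1 : ℕ) : ℝ) / 2) * (k : ℝ) ^ (((d - 1 : ℕ) : ℝ) / 2) := by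
        rw [← Real.rpow_add hkpos, ← Real.rpow_natCast (k : ℝ) (d - 1)]
        norm_num
      have hden : ((k ^ (d - 1) * VS.card : ℕ) : ℝ) ^ ((1 : ℝ) / 2)
          = (k : ℝ) ^ (((d - 1 : ℕ) : ℝ) / 2) * (VS.card : ℝ) ^ ((1 : ℝ) / 2) := by
        push_cast
        rw [Real.mul_rpow (pow_nonneg hkpos.le (d - 1)) hmSpos.le,
          ← Real.rpow_natCast (k : ℝ) (d - 1), ← Real.rpow_mul hkpos.le, mul_one_div]
      have hKn : K = (k : ℝ) ^ (((d - 1 : ℕ) : ℝ) / 2) := by rw [hK, hdn]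
      rw [hden, hhalf, hKn]
      have hkn2 : (0 : ℝ) < (k : ℝ) ^ (((d - 1 : ℕ) : ℝ) / 2) := Real.rpow_pos_of_pos hkpos _
      rw [mul_assoc, mul_div_mul_left _ _ (ne_of_gt hkn2), div_mul_eq_mul_div,
        mul_comm]
  -- conclude
  show sSup AS * K ≤ sSup AR
  rw [← le_div_iff₀ hKpos]
  refine Real.sSup_le (fun r hr => ?_) ?_
  · rw [le_div_iff₀ hKpos]
    exact le_csSup hARbdd (hmap r hr)
  · exact div_nonneg (Real.sSup_nonneg hARnonneg) hKpos.le
end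

section
/- Let F be a finite field of odd characteristic, ψ a nontrivial additive character, and n ∈ {2,3,4}. Let A ∈ M_n(F) have 1 in the (1,1) entry and 0 elsewhere. Then |Σ_{C ∈ M_n(F)} ψ(Tr(-AC - AC^2))| = |F|^{n^2 - n} · |F|^{1/2}. -/
open Matrix Finset

lemma addChar_map_sum' {A M : Type*} [AddCommMonoid A] [CommMonoid M] (ψ : AddChar A M)
    {ι : Type*} (s : Finset ι) (f : ι → A) :
    ψ (∑ i ∈ s, f i) = ∏ i ∈ s, ψ (f i) := by
  classical
  induction s using Finset.cons_induction with
  | empty => simp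
  | cons a s ha ih => rw [Finset.sum_cons, Finset.prod_cons, ψ.map_add_eq_mul, ih]

lemma sum_pi_succ' {M : Type*} [AddCommMonoid M] {X : Type*} [Fintype X] (m : ℕ)
    (g : (Fin (m + 1) → X) → M) :
    ∑ v : Fin (m + 1) → X, g v = ∑ x : X, ∑ t : Fin m → X, g (Fin.cons x t) := by
  rw [← (Fintype.sum_equiv (Fin.consEquiv fun _ => X)
      (fun p : X × (Fin m → X) => g (Fin.cons p.1 p.2)) g fun p => rfl),
    Fintype.sum_prod_type]

lemma trace_helper {F : Type} [Field F] {n : ℕ} (i0 : Fin n) (C : Matrix (Fin n) (Fin n) F) :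
    Matrix.trace (-(Matrix.single i0 i0 (1 : F) * C)
        - Matrix.single i0 i0 (1 : F) * C ^ 2)
      = -(C i0 i0) - ∑ k, C i0 k * C k i0 := by
  have h1 : ∀ M : Matrix (Fin n) (Fin n) F,
      Matrix.trace (Matrix.single i0 i0 (1 : F) * M) = M i0 i0 := by
    intro M
    simp [Matrix.trace, Matrix.diag, Matrix.mul_apply, Matrix.single, ite_and]
  rw [Matrix.trace_sub, Matrix.trace_neg, h1, h1, pow_two, Matrix.mul_apply]

lemma norm_gauss' {F : Type} [Field F] [Fintype F] [DecidableEq F] (hchar : ringChar F ≠ 2)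
    (ψ : AddChar F ℂ) (hψ : ψ ≠ 1) :
    ‖∑ a : F, ψ (-a - a * a)‖ = Real.sqrt (Fintype.card F) := by
  have h2 : (2 : F) ≠ 0 := Ring.two_ne_zero hchar
  have h4 : (4 : F) ≠ 0 := by
    have : (4 : F) = 2 * 2 := by norm_num
    rw [this]; exact mul_ne_zero h2 h2
  -- complete the square
  have step1 : ∑ a : F, ψ (-a - a * a) = ψ ((4 : F)⁻¹) * ∑ b : F, ψ (-(b * b)) := by
    rw [Finset.mul_sum]
    refine Fintype.sum_equiv (Equiv.subRight ((2 : F)⁻¹)).symm _ _ fun a => ?_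
    rw [← ψ.map_add_eq_mul]
    congr 1
    simp only [Equiv.subRight_symm_apply]
    field_simp
    ring
  rw [step1, norm_mul, AddChar.norm_apply, one_mul]
  -- reduce to a Gauss sum for ψ' = ψ ∘ (-1 * ·)
  set ψ' : AddChar F ℂ := ψ.mulShift (-1) with hψ'def
  have hψ'1 : ψ' ≠ 1 := by
    intro h
    apply hψ
    ext x
    have := DFunLike.congr_fun h (-x)
    simpa [hψ'def, AddChar.mulShift_apply] using this
  have hψ'prim : ψ'.IsPrimitive := AddChar.IsPrimitive.of_ne_one hψ'1
  have hsq : ∀ b : F, ψ (-(b * b)) = ψ' (b ^ 2) := by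
    intro b
    rw [hψ'def, AddChar.mulShift_apply]
    ring_nf
  simp_rw [hsq]
  -- the sum of ψ' over squares equals the Gauss sum of the quadratic character
  set χ : MulChar F ℂ := (quadraticChar F).ringHomComp (Int.castRingHom ℂ) with hχdef
  have key : ∑ b : F, ψ' (b ^ 2) = gaussSum χ ψ' := by
    have fib : ∑ b : F, ψ' (b ^ 2)
        = ∑ a : F, ∑ b ∈ univ.filter (fun b : F => b ^ 2 = a), ψ' (b ^ 2) := by
      rw [Finset.sum_fiberwise]
    rw [fib]
    have inner : ∀ a : F, ∑ b ∈ univ.filter (fun b : F => b ^ 2 = a), ψ' (b ^ 2)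
        = ((quadraticChar F a : ℂ) + 1) * ψ' a := by
      intro a
      rw [Finset.sum_congr rfl (fun b hb => by
        rw [(Finset.mem_filter.mp hb).2]), Finset.sum_const, nsmul_eq_mul]
      congr 1
      have hcard := quadraticChar_card_sqrts hchar a
      rw [Set.toFinset_setOf] at hcard
      have : ((univ.filter fun b : F => b ^ 2 = a).card : ℤ) = quadraticChar F a + 1 := hcard
      exact_mod_cast congrArg (fun z : ℤ => (z : ℂ)) this
    simp_rw [inner, add_mul, one_mul, Finset.sum_add_distrib]
    rw [AddChar.sum_eq_zero_of_ne_one hψ'1, add_zero, gaussSum]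
    rfl
  rw [key]
  -- norm of the Gauss sum
  have hχ1 : χ ≠ 1 :=
    (MulChar.ringHomComp_ne_one_iff (RingHom.injective_int _)).mpr (quadraticChar_ne_one hchar)
  have hquad : χ.IsQuadratic := (quadraticChar_isQuadratic F).comp _
  have hg2 : gaussSum χ ψ' ^ 2 = χ (-1) * (Fintype.card F : ℂ) :=
    gaussSum_sq hχ1 hquad hψ'prim
  have hn1 : ‖χ (-1)‖ = 1 := by
    rcases hquad (-1) with h | h | h
    · exfalso
      have h' : ((quadraticChar F (-1) : ℤ) : ℂ) = 0 := by
        simpa [hχdef, MulChar.ringHomComp_apply] using h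
      have : quadraticChar F (-1) = 0 := by exact_mod_cast h'
      rw [quadraticChar_eq_zero_iff] at this
      exact one_ne_zero (neg_eq_zero.mp this)
    · rw [h]; simp
    · rw [h]; simp
  have hnorm2 : ‖gaussSum χ ψ'‖ ^ 2 = (Fintype.card F : ℝ) := by
    rw [← norm_pow, hg2, norm_mul, hn1, one_mul, Complex.norm_natCast]
  rw [← hnorm2, Real.sqrt_sq (norm_nonneg _)]

lemma main_sum {F : Type} [Field F] [Fintype F] [DecidableEq F]
    (ψ : AddChar F ℂ) (hψ : ψ.IsPrimitive) (m : ℕ) :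
    ∑ C : Matrix (Fin (m+1)) (Fin (m+1)) F, ψ (-(C 0 0) - ∑ k, C 0 k * C k 0)
      = (∑ a : F, ψ (-a - a * a)) * (Fintype.card F : ℂ) ^ (m ^ 2 + m) := by
  set q := Fintype.card F with hq
  -- split off the first row
  have h1 : ∑ C : Matrix (Fin (m+1)) (Fin (m+1)) F, ψ (-(C 0 0) - ∑ k, C 0 k * C k 0)
      = ∑ r : Fin (m+1) → F, ∑ B : Fin m → (Fin (m+1) → F),
          (ψ (-(r 0) - r 0 * r 0) * ∏ k : Fin m, ψ (-(r k.succ) * B k 0)) := by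
    show ∑ C : Fin (m+1) → (Fin (m+1) → F), ψ (-(C 0 0) - ∑ k, C 0 k * C k 0) = _
    rw [sum_pi_succ' m]
    refine Finset.sum_congr rfl fun r _ => Finset.sum_congr rfl fun B _ => ?_
    rw [← addChar_map_sum', ← ψ.map_add_eq_mul]
    congr 1
    rw [Fin.sum_univ_succ]
    simp only [Fin.cons_zero, Fin.cons_succ]
    simp only [neg_mul, Finset.sum_neg_distrib]
    ring
  rw [h1]
  -- sum over the remaining rows factors
  have hv : ∀ t : F, ∑ v : Fin (m+1) → F, ψ (t * v 0)
      = (q : ℂ) ^ m * if t = 0 then (q : ℂ) else 0 := by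
    intro t
    rw [sum_pi_succ' m (fun v => ψ (t * v 0))]
    simp only [Fin.cons_zero, Finset.sum_const, Finset.card_univ, nsmul_eq_mul]
    rw [← Finset.mul_sum]
    have hc : (Fintype.card (Fin m → F) : ℂ) = (q : ℂ) ^ m := by
      rw [Fintype.card_fun, Fintype.card_fin]
      push_cast
      rfl
    rw [hc]
    congr 1
    simp_rw [mul_comm t]
    exact_mod_cast AddChar.sum_mulShift t hψ
  have h2 : ∀ r : Fin (m+1) → F,
      ∑ B : Fin m → (Fin (m+1) → F),
          (ψ (-(r 0) - r 0 * r 0) * ∏ k : Fin m, ψ (-(r k.succ) * B k 0))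
        = ψ (-(r 0) - r 0 * r 0)
            * ∏ k : Fin m, ((q : ℂ) ^ m * if r k.succ = 0 then (q : ℂ) else 0) := by
    intro r
    rw [← Finset.mul_sum]
    congr 1
    refine ((Fintype.prod_sum
        (fun (k : Fin m) (v : Fin (m+1) → F) => ψ (-(r k.succ) * v 0))).symm).trans ?_
    refine Finset.prod_congr rfl fun k _ => ?_
    rw [hv (-(r k.succ))]
    simp [neg_eq_zero]
  simp_rw [h2]
  -- split off the first entry of the first row
  rw [sum_pi_succ' m]
  simp only [Fin.cons_zero, Fin.cons_succ]
  rw [← Finset.sum_mul_sum]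
  congr 1
  -- the remaining sum is q^(m^2+m)
  refine ((Fintype.prod_sum
      (fun (_ : Fin m) (y : F) => (q : ℂ) ^ m * if y = 0 then (q : ℂ) else 0)).symm).trans ?_
  have hy : ∑ y : F, ((q : ℂ) ^ m * if y = 0 then (q : ℂ) else 0) = (q : ℂ) ^ (m + 1) := by
    rw [← Finset.mul_sum, Finset.sum_ite_eq' Finset.univ (0 : F) fun _ => (q : ℂ)]
    simp [pow_succ]
  rw [Finset.prod_congr rfl fun k _ => hy, Finset.prod_const, Finset.card_univ, Fintype.card_fin,
    ← pow_mul]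
  ring_nf

/-- For a finite field `F` of odd characteristic, a nontrivial additive character `ψ`,
`n ∈ {2,3,4}`, and `A = E₁₁ ∈ Mₙ(F)`, the sum `∑_{C ∈ Mₙ(F)} ψ(Tr(-AC - AC²))` has
modulus `|F|^{n²-n}·|F|^{1/2}`. -/
theorem stmt17 {F : Type} [Field F] [Fintype F] [DecidableEq F] (hchar : ringChar F ≠ 2)
    (ψ : AddChar F ℂ) (hψ : ψ ≠ 1) (n : ℕ) (hn : n = 2 ∨ n = 3 ∨ n = 4) :
    ‖∑ C : Matrix (Fin n) (Fin n) F,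
        ψ (Matrix.trace
          (-(Matrix.single (⟨0, by omega⟩ : Fin n) (⟨0, by omega⟩ : Fin n) (1 : F) * C)
          - Matrix.single (⟨0, by omega⟩ : Fin n) (⟨0, by omega⟩ : Fin n) (1 : F)
            * C ^ 2))‖
      = (Fintype.card F : ℝ) ^ (n ^ 2 - n) * (Fintype.card F : ℝ) ^ ((1 : ℝ) / 2) := by
  have hψprim : ψ.IsPrimitive := AddChar.IsPrimitive.of_ne_one hψ
  obtain ⟨m, rfl⟩ : ∃ m, n = m + 1 := ⟨n - 1, by omega⟩
  have key : ∑ C : Matrix (Fin (m+1)) (Fin (m+1)) F,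
      ψ (Matrix.trace
        (-(Matrix.single (0 : Fin (m+1)) (0 : Fin (m+1)) (1 : F) * C)
        - Matrix.single (0 : Fin (m+1)) (0 : Fin (m+1)) (1 : F) * C ^ 2))
      = (∑ a : F, ψ (-a - a * a)) * (Fintype.card F : ℂ) ^ (m ^ 2 + m) := by
    simp_rw [trace_helper]
    exact main_sum ψ hψprim m
  rw [show (⟨0, by omega⟩ : Fin (m+1)) = (0 : Fin (m+1)) from rfl, key, norm_mul, norm_pow,
    Complex.norm_natCast, norm_gauss' hchar ψ hψ]
  have he : (m + 1) ^ 2 - (m + 1) = m ^ 2 + m := by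
    have : (m + 1) ^ 2 = m ^ 2 + 2 * m + 1 := by ring
    omega
  rw [he, Real.sqrt_eq_rpow, mul_comm]
end
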